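/- arXiv:1307.0622 — 12 statements merged into one kernel-verified Lean document; each statement's English description precedes it below -/
import Mathlib

section
/- For every y in the closed unit disk of ℝ² and every z in the open unit disk with z ≠ 0, one has |y − z| ≤ 3 |y − z*|, where z* = z/|z|². -/
/-- The inverse point of `z` with respect to the unit circle: `z* = z / |z|²`. -/
noncomputable def starInv (z : ℂ) : ℂ := (‖z‖ ^ 2)⁻¹ • z

/-- For every `y` in the closed unit disk and every `z ≠ 0` in the open unit disk,
`|y − z| ≤ 3 |y − z*|`. -/
theorem dist_le_three_mul_dist_starInv
    (y : ℂ) (hy : y ∈ Metric.closedBall (0 : ℂ) 1)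
    (z : ℂ) (hz : z ∈ Metric.ball (0 : ℂ) 1) (hz0 : z ≠ 0) :
    ‖y - z‖ ≤ 3 * ‖y - starInv z‖ := by
  have hr : 0 < ‖z‖ := norm_pos_iff.mpr hz0
  have hr1 : ‖z‖ < 1 := by simpa using hz
  have hy1 : ‖y‖ ≤ 1 := by simpa using hy
  have hd : ‖starInv z - z‖ = ‖z‖⁻¹ - ‖z‖ := by
    have h : starInv z - z = ((‖z‖ ^ 2)⁻¹ - 1) • z := by
      rw [starInv, sub_smul, one_smul]
    rw [h, norm_smul, Real.norm_eq_abs, abs_of_nonneg, sub_mul, one_mul, pow_two]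
    · rw [mul_inv, mul_assoc, inv_mul_cancel₀ hr.ne']
      ring
    · have : ‖z‖ ^ 2 ≤ 1 := by nlinarith
      have h2 : (1:ℝ) ≤ (‖z‖ ^ 2)⁻¹ := by
        rw [le_inv_comm₀] <;> nlinarith
      linarith
  have hs : ‖starInv z‖ = ‖z‖⁻¹ := by
    rw [starInv, norm_smul, Real.norm_eq_abs, abs_of_nonneg (by positivity), pow_two,
      mul_inv, mul_assoc, inv_mul_cancel₀ hr.ne', mul_one]
  have h1 : ‖z‖⁻¹ - 1 ≤ ‖y - starInv z‖ := by
    have := norm_sub_norm_le (starInv z) y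
    rw [hs] at this
    calc ‖z‖⁻¹ - 1 ≤ ‖z‖⁻¹ - ‖y‖ := by linarith
      _ ≤ ‖starInv z - y‖ := this
      _ = ‖y - starInv z‖ := norm_sub_rev _ _
  have h2 : ‖y - z‖ ≤ ‖y - starInv z‖ + (‖z‖⁻¹ - ‖z‖) := by
    calc ‖y - z‖ = ‖(y - starInv z) + (starInv z - z)‖ := by ring_nf
      _ ≤ ‖y - starInv z‖ + ‖starInv z - z‖ := norm_add_le _ _
      _ = ‖y - starInv z‖ + (‖z‖⁻¹ - ‖z‖) := by rw [hd]
  have hinv : ‖z‖ * ‖z‖⁻¹ = 1 := mul_inv_cancel₀ hr.ne'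
  nlinarith [sq_nonneg (1 - ‖z‖), mul_pos hr (show (0:ℝ) < ‖z‖⁻¹ by positivity)]
end

section
/- There exists a constant C > 0 such that |K_D(y,z)| ≤ C/|y − z| for all y, z in the open unit disk D with y ≠ z. -/
/-- Rotation by `π/2`: for `a = (a₁, a₂)`, `a^⊥ = (−a₂, a₁)`. -/
noncomputable def perp (a : ℂ) : ℂ := Complex.I * a

/-- The Biot–Savart kernel of the unit disk:
`K_D(y,z) = (1/(2π)) ((y−z)/|y−z|² − (y−z*)/|y−z*|²)^⊥` for `z ≠ 0`,
with the convention `K_D(y,0) = (1/(2π)) y^⊥/|y|²`. -/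
noncomputable def KD (y z : ℂ) : ℂ :=
  if z = 0 then (2 * Real.pi)⁻¹ • perp ((‖y‖ ^ 2)⁻¹ • y)
  else (2 * Real.pi)⁻¹ •
    perp ((‖y - z‖ ^ 2)⁻¹ • (y - z) - (‖y - starInv z‖ ^ 2)⁻¹ • (y - starInv z))

lemma key_identity (y z : ℂ) :
    ‖y - z‖ ^ 2 + (1 - ‖y‖ ^ 2) * (1 - ‖z‖ ^ 2) = ‖1 - (starRingEnd ℂ) z * y‖ ^ 2 := by
  simp only [Complex.sq_norm]
  simp only [Complex.normSq_apply, Complex.sub_re, Complex.sub_im, Complex.mul_re,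
    Complex.mul_im, Complex.one_re, Complex.one_im, Complex.conj_re, Complex.conj_im]
  ring

lemma key_ineq {y z : ℂ} (hy : ‖y‖ < 1) (hz : ‖z‖ < 1) :
    ‖y - z‖ ≤ ‖1 - (starRingEnd ℂ) z * y‖ := by
  have h := key_identity y z
  have h1 : (0:ℝ) ≤ 1 - ‖y‖ ^ 2 := by nlinarith [norm_nonneg y]
  have h2 : (0:ℝ) ≤ 1 - ‖z‖ ^ 2 := by nlinarith [norm_nonneg z]
  have hsq : ‖y - z‖ ^ 2 ≤ ‖1 - (starRingEnd ℂ) z * y‖ ^ 2 := by nlinarith [mul_nonneg h1 h2]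
  exact (pow_le_pow_iff_left₀ (norm_nonneg _) (norm_nonneg _) two_ne_zero).1 hsq

lemma norm_perp (a : ℂ) : ‖perp a‖ = ‖a‖ := by
  simp [perp]

lemma norm_inv_smul (w : ℂ) : ‖(‖w‖ ^ 2)⁻¹ • w‖ = ‖w‖⁻¹ := by
  by_cases h : w = 0
  · simp [h]
  · have hw : (0:ℝ) < ‖w‖ := norm_pos_iff.2 h
    rw [norm_smul, Real.norm_eq_abs, abs_of_pos (by positivity)]
    rw [pow_two, mul_inv, mul_assoc, inv_mul_cancel₀ hw.ne', mul_one]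

lemma starInv_dist {y z : ℂ} (hy : ‖y‖ < 1) (hz : ‖z‖ < 1) (hz0 : z ≠ 0) :
    ‖y - z‖ ≤ ‖y - starInv z‖ := by
  have hzn : (0:ℝ) < ‖z‖ := norm_pos_iff.2 hz0
  have hw : ((‖z‖ ^ 2 : ℝ) : ℂ) ≠ 0 := by
    simp only [ne_eq, Complex.ofReal_eq_zero]; positivity
  have hzz : (starRingEnd ℂ) z * z = ((‖z‖ ^ 2 : ℝ) : ℂ) := by
    rw [mul_comm, Complex.mul_conj]
    norm_cast
    simp [Complex.normSq_eq_norm_sq]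
  have h0 : (starRingEnd ℂ) z * starInv z = 1 := by
    rw [starInv, Complex.real_smul, Complex.ofReal_inv, mul_left_comm, hzz,
      inv_mul_cancel₀ hw]
  have h1 : (starRingEnd ℂ) z * (y - starInv z) = (starRingEnd ℂ) z * y - 1 := by
    rw [mul_sub, h0]
  have h2 : ‖z‖ * ‖y - starInv z‖ = ‖1 - (starRingEnd ℂ) z * y‖ := by
    rw [norm_sub_rev 1, ← h1, norm_mul, RCLike.norm_conj]
  have h3 := key_ineq hy hz
  nlinarith [norm_nonneg (y - starInv z)]

/-- There is `C > 0` with `|K_D(y,z)| ≤ C/|y − z|` for all `y ≠ z` in the open unit disk. -/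
theorem KD_norm_le :
    ∃ C : ℝ, 0 < C ∧ ∀ y ∈ Metric.ball (0 : ℂ) 1, ∀ z ∈ Metric.ball (0 : ℂ) 1,
      y ≠ z → ‖KD y z‖ ≤ C / ‖y - z‖ := by
  refine ⟨1, one_pos, fun y hy z hz hne => ?_⟩
  rw [Metric.mem_ball, dist_zero_right] at hy hz
  have hyz : (0:ℝ) < ‖y - z‖ := by
    rw [norm_pos_iff]; exact sub_ne_zero.2 hne
  have hpi : (0:ℝ) < 2 * Real.pi := by positivity
  by_cases hz0 : z = 0
  · subst hz0
    rw [KD, if_pos rfl, norm_smul, norm_perp, norm_inv_smul]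
    rw [Real.norm_eq_abs, abs_of_pos (by positivity : (0:ℝ) < (2 * Real.pi)⁻¹)]
    rw [sub_zero] at hyz ⊢
    rw [div_eq_mul_inv, one_mul]
    have : (2 * Real.pi)⁻¹ ≤ 1 := by
      rw [inv_le_one_iff₀]; right; nlinarith [Real.pi_gt_three]
    nlinarith [inv_pos.2 hyz]
  · rw [KD, if_neg hz0, norm_smul, norm_perp]
    have hA : ‖(‖y - z‖ ^ 2)⁻¹ • (y - z)‖ = ‖y - z‖⁻¹ := norm_inv_smul _
    have hB : ‖(‖y - starInv z‖ ^ 2)⁻¹ • (y - starInv z)‖ ≤ ‖y - z‖⁻¹ := by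
      rw [norm_inv_smul]
      exact inv_anti₀ hyz (starInv_dist hy hz hz0)
    have htri := norm_sub_le ((‖y - z‖ ^ 2)⁻¹ • (y - z)) ((‖y - starInv z‖ ^ 2)⁻¹ • (y - starInv z))
    rw [Real.norm_eq_abs, abs_of_pos (by positivity : (0:ℝ) < (2 * Real.pi)⁻¹)]
    rw [div_eq_mul_inv, one_mul]
    have h2pi : (2 * Real.pi)⁻¹ * 2 ≤ 1 := by
      rw [inv_mul_le_iff₀ hpi]; nlinarith [Real.pi_gt_three]
    nlinarith [inv_pos.2 hyz, inv_pos.2 hpi, hA ▸ htri]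
end

section
/- There exists a constant C > 0 such that |K_D(y₁,z) − K_D(y₂,z)| ≤ C |y₁ − y₂| / (|y₁ − z| |y₂ − z|) for all y₁, y₂ in the open unit disk D and all z ∈ D with z ≠ y₁ and z ≠ y₂. -/
lemma conj_inv_eq (a : ℂ) : (‖a‖ ^ 2)⁻¹ • a = ((starRingEnd ℂ) a)⁻¹ := by
  rcases eq_or_ne a 0 with rfl | h
  · simp
  · have h2 : (‖a‖ ^ 2 : ℝ) ≠ 0 := pow_ne_zero _ (norm_ne_zero_iff.mpr h)
    refine eq_inv_of_mul_eq_one_left ?_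
    have hma : a * (starRingEnd ℂ) a = ((‖a‖ ^ 2 : ℝ) : ℂ) := by
      rw [Complex.mul_conj]
      norm_cast
      rw [Complex.normSq_eq_norm_sq]
    rw [smul_mul_assoc, hma, Complex.real_smul, ← Complex.ofReal_mul,
      inv_mul_cancel₀ h2, Complex.ofReal_one]

lemma KD_zero (y : ℂ) : KD y 0 = (2 * Real.pi)⁻¹ • (Complex.I * ((starRingEnd ℂ) y)⁻¹) := by
  rw [KD, if_pos rfl, perp, conj_inv_eq]

lemma KD_ne (y z : ℂ) (h : z ≠ 0) :
    KD y z = (2 * Real.pi)⁻¹ •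
      (Complex.I * (((starRingEnd ℂ) (y - z))⁻¹ - ((starRingEnd ℂ) (y - starInv z))⁻¹)) := by
  rw [KD, if_neg h, perp, conj_inv_eq, conj_inv_eq]

lemma normSq_identity (y z : ℂ) :
    Complex.normSq (y * (starRingEnd ℂ) z - 1) - Complex.normSq (y - z)
      = (1 - Complex.normSq y) * (1 - Complex.normSq z) := by
  simp [Complex.normSq_apply, Complex.mul_re, Complex.mul_im, Complex.sub_re,
    Complex.sub_im, Complex.conj_re, Complex.conj_im, Complex.one_re, Complex.one_im]
  ring

lemma norm_sub_le_norm_mul_conj_sub_one (y z : ℂ) (hy : ‖y‖ < 1) (hz : ‖z‖ < 1) :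
    ‖y - z‖ ≤ ‖y * (starRingEnd ℂ) z - 1‖ := by
  have h1 : Complex.normSq y ≤ 1 := by
    rw [Complex.normSq_eq_norm_sq]; nlinarith [norm_nonneg y]
  have h2 : Complex.normSq z ≤ 1 := by
    rw [Complex.normSq_eq_norm_sq]; nlinarith [norm_nonneg z]
  have key := normSq_identity y z
  have hle : Complex.normSq (y - z) ≤ Complex.normSq (y * (starRingEnd ℂ) z - 1) := by
    nlinarith
  rw [Complex.norm_def, Complex.norm_def]
  exact Real.sqrt_le_sqrt hle

/-- On the unit disk, the inverse point is farther: `‖y − z‖ ≤ ‖y − z*‖`. -/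
lemma norm_sub_le_norm_sub_starInv (y z : ℂ) (hy : ‖y‖ < 1) (hz : ‖z‖ < 1) (h0 : z ≠ 0) :
    ‖y - z‖ ≤ ‖y - starInv z‖ := by
  have hcz : (starRingEnd ℂ) z ≠ 0 := by
    rw [starRingEnd_apply]; exact star_ne_zero.mpr h0
  have heq : y - starInv z = (y * (starRingEnd ℂ) z - 1) / (starRingEnd ℂ) z := by
    rw [starInv, conj_inv_eq]; field_simp
  rw [heq, norm_div]
  have hnz : ‖(starRingEnd ℂ) z‖ = ‖z‖ := by
    rw [Complex.norm_conj]
  rw [hnz]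
  have hz0 : 0 < ‖z‖ := norm_pos_iff.mpr h0
  rw [le_div_iff₀ hz0]
  calc ‖y - z‖ * ‖z‖ ≤ ‖y - z‖ * 1 := mul_le_mul_of_nonneg_left hz.le (norm_nonneg _)
    _ = ‖y - z‖ := mul_one _
    _ ≤ ‖y * (starRingEnd ℂ) z - 1‖ := norm_sub_le_norm_mul_conj_sub_one y z hy hz

lemma norm_inv_sub_inv' (a b : ℂ) (ha : a ≠ 0) (hb : b ≠ 0) :
    ‖a⁻¹ - b⁻¹‖ = ‖a - b‖ / (‖a‖ * ‖b‖) := by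
  rw [inv_sub_inv ha hb, norm_div, norm_mul, norm_sub_rev]

/-- There is `C > 0` with
`|K_D(y₁,z) − K_D(y₂,z)| ≤ C |y₁ − y₂| / (|y₁ − z| |y₂ − z|)`
for all `y₁, y₂` in the open unit disk and all `z` in the open unit disk
with `z ≠ y₁` and `z ≠ y₂`. -/
theorem KD_sub_norm_le :
    ∃ C : ℝ, 0 < C ∧ ∀ y₁ ∈ Metric.ball (0 : ℂ) 1, ∀ y₂ ∈ Metric.ball (0 : ℂ) 1,
      ∀ z ∈ Metric.ball (0 : ℂ) 1, z ≠ y₁ → z ≠ y₂ →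
        ‖KD y₁ z - KD y₂ z‖ ≤ C * ‖y₁ - y₂‖ / (‖y₁ - z‖ * ‖y₂ - z‖) := by
  refine ⟨1, one_pos, ?_⟩
  intro y₁ hy₁ y₂ hy₂ z hz hz1 hz2
  rw [Metric.mem_ball, dist_zero_right] at hy₁ hy₂ hz
  have hr₁ : (0 : ℝ) < ‖y₁ - z‖ := by
    rw [norm_pos_iff, sub_ne_zero]; exact fun h => hz1 h.symm
  have hr₂ : (0 : ℝ) < ‖y₂ - z‖ := by
    rw [norm_pos_iff, sub_ne_zero]; exact fun h => hz2 h.symm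
  have ha₁ : y₁ - z ≠ 0 := norm_pos_iff.mp hr₁
  have ha₂ : y₂ - z ≠ 0 := norm_pos_iff.mp hr₂
  have hcne : ∀ a : ℂ, a ≠ 0 → (starRingEnd ℂ) a ≠ 0 := by
    intro a h; rw [starRingEnd_apply]; exact star_ne_zero.mpr h
  have hnc : ∀ a : ℂ, ‖(starRingEnd ℂ) a‖ = ‖a‖ := by
    intro a; rw [Complex.norm_conj]
  have hconjsub : ∀ a b : ℂ, ‖(starRingEnd ℂ) a - (starRingEnd ℂ) b‖ = ‖a - b‖ := by
    intro a b; rw [← map_sub, hnc]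
  have hc₁ := hcne _ ha₁
  have hc₂ := hcne _ ha₂
  have hπ : (0:ℝ) < (2 * Real.pi)⁻¹ := by positivity
  have hnp : ‖(2 * Real.pi : ℝ)‖ = 2 * Real.pi := by
    rw [Real.norm_eq_abs, abs_of_pos]; positivity
  have h2π : (2 * Real.pi)⁻¹ * 2 ≤ 1 := by
    rw [inv_mul_le_iff₀ (by positivity)]
    nlinarith [Real.pi_gt_three]
  by_cases h0 : z = 0
  · subst h0
    have hy1n : y₁ ≠ 0 := by simpa using ha₁
    have hy2n : y₂ ≠ 0 := by simpa using ha₂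
    rw [KD_zero, KD_zero, ← smul_sub, ← mul_sub, norm_smul, norm_mul,
      Complex.norm_I, one_mul, norm_inv_sub_inv' _ _ (hcne _ hy1n) (hcne _ hy2n),
      hconjsub, hnc, hnc, norm_inv, hnp]
    simp only [sub_zero]
    have hq : (0:ℝ) ≤ ‖y₁ - y₂‖ / (‖y₁‖ * ‖y₂‖) := by positivity
    have hle1 : (2 * Real.pi)⁻¹ ≤ 1 := by nlinarith
    calc (2 * Real.pi)⁻¹ * (‖y₁ - y₂‖ / (‖y₁‖ * ‖y₂‖))
        ≤ 1 * (‖y₁ - y₂‖ / (‖y₁‖ * ‖y₂‖)) := mul_le_mul_of_nonneg_right hle1 hq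
      _ = 1 * ‖y₁ - y₂‖ / (‖y₁‖ * ‖y₂‖) := by ring
  · have hs₁ : ‖y₁ - z‖ ≤ ‖y₁ - starInv z‖ := norm_sub_le_norm_sub_starInv y₁ z hy₁ hz h0
    have hs₂ : ‖y₂ - z‖ ≤ ‖y₂ - starInv z‖ := norm_sub_le_norm_sub_starInv y₂ z hy₂ hz h0
    have hb₁ : y₁ - starInv z ≠ 0 := by rw [← norm_pos_iff]; exact lt_of_lt_of_le hr₁ hs₁
    have hb₂ : y₂ - starInv z ≠ 0 := by rw [← norm_pos_iff]; exact lt_of_lt_of_le hr₂ hs₂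
    rw [KD_ne _ _ h0, KD_ne _ _ h0, ← smul_sub, ← mul_sub, norm_smul, norm_mul,
      Complex.norm_I, one_mul, norm_inv, hnp]
    have hre : ((starRingEnd ℂ) (y₁ - z))⁻¹ - ((starRingEnd ℂ) (y₁ - starInv z))⁻¹ -
        (((starRingEnd ℂ) (y₂ - z))⁻¹ - ((starRingEnd ℂ) (y₂ - starInv z))⁻¹)
        = (((starRingEnd ℂ) (y₁ - z))⁻¹ - ((starRingEnd ℂ) (y₂ - z))⁻¹) -
          (((starRingEnd ℂ) (y₁ - starInv z))⁻¹ - ((starRingEnd ℂ) (y₂ - starInv z))⁻¹) := by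
      ring
    rw [hre]
    have hT : ‖(((starRingEnd ℂ) (y₁ - z))⁻¹ - ((starRingEnd ℂ) (y₂ - z))⁻¹) -
          (((starRingEnd ℂ) (y₁ - starInv z))⁻¹ - ((starRingEnd ℂ) (y₂ - starInv z))⁻¹)‖
        ≤ 2 * (‖y₁ - y₂‖ / (‖y₁ - z‖ * ‖y₂ - z‖)) := by
      refine le_trans (norm_sub_le _ _) ?_
      rw [norm_inv_sub_inv' _ _ hc₁ hc₂, norm_inv_sub_inv' _ _ (hcne _ hb₁) (hcne _ hb₂),
        hconjsub, hconjsub]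
      simp only [hnc]
      have hfix : ‖(y₁ - z) - (y₂ - z)‖ = ‖y₁ - y₂‖ := by ring_nf
      have hfix2 : ‖(y₁ - starInv z) - (y₂ - starInv z)‖ = ‖y₁ - y₂‖ := by ring_nf
      rw [hfix, hfix2]
      have h1 : ‖y₁ - y₂‖ / (‖y₁ - starInv z‖ * ‖y₂ - starInv z‖)
          ≤ ‖y₁ - y₂‖ / (‖y₁ - z‖ * ‖y₂ - z‖) := by
        apply div_le_div_of_nonneg_left (norm_nonneg _) (by positivity)
        exact mul_le_mul hs₁ hs₂ hr₂.le (norm_nonneg _)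
      linarith
    have hq : (0:ℝ) ≤ ‖y₁ - y₂‖ / (‖y₁ - z‖ * ‖y₂ - z‖) := by positivity
    calc (2 * Real.pi)⁻¹ * ‖_‖
        ≤ (2 * Real.pi)⁻¹ * (2 * (‖y₁ - y₂‖ / (‖y₁ - z‖ * ‖y₂ - z‖))) :=
          mul_le_mul_of_nonneg_left hT hπ.le
      _ = ((2 * Real.pi)⁻¹ * 2) * (‖y₁ - y₂‖ / (‖y₁ - z‖ * ‖y₂ - z‖)) := by ring
      _ ≤ 1 * (‖y₁ - y₂‖ / (‖y₁ - z‖ * ‖y₂ - z‖)) := mul_le_mul_of_nonneg_right h2π hq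
      _ = 1 * ‖y₁ - y₂‖ / (‖y₁ - z‖ * ‖y₂ - z‖) := by ring
end

section
/- For every y ∈ ℝ² with |y| = 1 and every z in the open unit disk D, the inner product K_D(y,z) · y equals 0. -/
lemma inner_I_mul_self (y : ℂ) : (inner ℝ (Complex.I * y) y : ℝ) = 0 := by
  simp; ring

lemma inner_perp_smul (c r : ℝ) (y : ℂ) : (inner ℝ (c • (Complex.I * (r • y))) y : ℝ) = 0 := by
  rw [mul_smul_comm, real_inner_smul_left, real_inner_smul_left, inner_I_mul_self]
  ring

lemma norm_id (y z : ℂ) (hy : ‖y‖ = 1) (hz : z ≠ 0) :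
    ‖y - starInv z‖ * ‖z‖ = ‖y - z‖ := by
  have ha : (‖z‖ : ℝ) ^ 2 ≠ 0 := pow_ne_zero _ (norm_ne_zero_iff.mpr hz)
  have hac : ((‖z‖ : ℂ)) ^ 2 ≠ 0 := by exact_mod_cast ha
  have hinv : (((‖z‖ : ℂ)) ^ 2)⁻¹ * ((‖z‖ : ℂ)) ^ 2 = 1 := inv_mul_cancel₀ hac
  have e1 : (y - starInv z) * (starRingEnd ℂ) z = y * (starRingEnd ℂ) (z - y) := by
    have hzc : z * (starRingEnd ℂ) z = ((‖z‖ : ℂ)) ^ 2 := Complex.mul_conj' z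
    have hyc : y * (starRingEnd ℂ) y = 1 := by
      rw [Complex.mul_conj', hy]; norm_num
    unfold starInv
    rw [Complex.real_smul, map_sub]
    push_cast
    linear_combination hyc - (((‖z‖ : ℂ)) ^ 2)⁻¹ * hzc - hinv
  have := congrArg norm e1
  rw [norm_mul, norm_mul, RCLike.norm_conj, RCLike.norm_conj, hy, one_mul,
    norm_sub_rev z y] at this
  exact this

lemma key_decomp (y z : ℂ) (hy : ‖y‖ = 1) (hz0 : z ≠ 0) (hyz : y ≠ z) :
    (‖y - z‖ ^ 2)⁻¹ • (y - z) - (‖y - starInv z‖ ^ 2)⁻¹ • (y - starInv z)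
      = ((‖y - z‖ ^ 2)⁻¹ * (1 - ‖z‖ ^ 2)) • y := by
  have hzn : ‖z‖ ≠ 0 := norm_ne_zero_iff.mpr hz0
  have hNn : ‖y - z‖ ≠ 0 := norm_ne_zero_iff.mpr (sub_ne_zero.mpr hyz)
  have h1 : ‖y - starInv z‖ ^ 2 = ‖y - z‖ ^ 2 / ‖z‖ ^ 2 := by
    rw [eq_div_iff (pow_ne_zero _ hzn), ← mul_pow, norm_id y z hy hz0]
  rw [h1]
  unfold starInv
  match_scalars <;> field_simp [hzn, hNn] <;> ring

/-- For `|y| = 1` and `z` in the open unit disk, `K_D(y,z) · y = 0`. -/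
theorem KD_inner_eq_zero (y : ℂ) (hy : ‖y‖ = 1) (z : ℂ) (hz : z ∈ Metric.ball (0 : ℂ) 1) :
    (inner ℝ (KD y z) y : ℝ) = 0 := by
  by_cases hz0 : z = 0
  · simp only [KD, if_pos hz0, perp]
    exact inner_perp_smul _ _ y
  · have hzlt : ‖z‖ < 1 := by simpa [Metric.mem_ball] using hz
    have hyz : y ≠ z := by
      intro h
      rw [h] at hy
      rw [hy] at hzlt
      exact lt_irrefl _ hzlt
    simp only [KD, if_neg hz0, perp]
    rw [key_decomp y z hy hz0 hyz]
    exact inner_perp_smul _ _ y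
end

section
/- For all y, z ∈ ℝ² with z ≠ 0, z ≠ y and z ≠ y*, one has 2π (K_D(y,z) · y) = (z^⊥ · y) (|y|² − 1)(1/|z|² − 1) / (|y − z|² |y − z*|²). -/
private theorem key_real_id (a b c d : ℝ) (hr : c^2+d^2 ≠ 0)
    (h1 : (a-c)^2+(b-d)^2 ≠ 0)
    (h2 : (a - c/(c^2+d^2))^2 + (b - d/(c^2+d^2))^2 ≠ 0) :
    a*(-((b-d)/((a-c)^2+(b-d)^2) - (b - d/(c^2+d^2))/((a - c/(c^2+d^2))^2 + (b - d/(c^2+d^2))^2)))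
    + b*((a-c)/((a-c)^2+(b-d)^2) - (a - c/(c^2+d^2))/((a - c/(c^2+d^2))^2 + (b - d/(c^2+d^2))^2))
    = (-d*a + c*b)*(a^2+b^2-1)*((c^2+d^2)⁻¹ - 1)/(((a-c)^2+(b-d)^2)*((a - c/(c^2+d^2))^2 + (b - d/(c^2+d^2))^2)) := by
  have hM2 : ((a*(c^2+d^2)-c)^2+(b*(c^2+d^2)-d)^2)
      = ((a - c/(c^2+d^2))^2 + (b - d/(c^2+d^2))^2) * (c^2+d^2)^2 := by
    field_simp
  have h2' : (a*(c^2+d^2)-c)^2+(b*(c^2+d^2)-d)^2 ≠ 0 := by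
    rw [hM2]; exact mul_ne_zero h2 (pow_ne_zero 2 hr)
  have hN2 : (a - c/(c^2+d^2))^2 + (b - d/(c^2+d^2))^2
      = ((a*(c^2+d^2)-c)^2+(b*(c^2+d^2)-d)^2) / (c^2+d^2)^2 := by
    rw [hM2]; field_simp
  have ea : a - c/(c^2+d^2) = (a*(c^2+d^2)-c)/(c^2+d^2) := by field_simp
  have eb : b - d/(c^2+d^2) = (b*(c^2+d^2)-d)/(c^2+d^2) := by field_simp
  rw [hN2, ea, eb]
  field_simp
  ring

private theorem starInv_involutive {z : ℂ} (hz : z ≠ 0) : starInv (starInv z) = z := by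
  have hz' : ‖z‖ ≠ 0 := norm_ne_zero_iff.2 hz
  have h1 : ‖starInv z‖ = ‖z‖⁻¹ := by
    rw [starInv, norm_smul, Real.norm_eq_abs, abs_inv, abs_pow, abs_norm, pow_two,
      mul_inv, mul_assoc, inv_mul_cancel₀ hz']
    simp
  rw [starInv, h1, starInv, inv_pow, inv_inv, smul_smul, mul_inv_cancel₀ (pow_ne_zero 2 hz'),
    one_smul]

/-- For `z ≠ 0`, `z ≠ y`, `z ≠ y*`:
`2π (K_D(y,z)·y) = (z^⊥·y)(|y|²−1)(1/|z|²−1)/(|y−z|²|y−z*|²)`. -/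
theorem two_pi_KD_inner (y z : ℂ) (hz0 : z ≠ 0) (hzy : z ≠ y) (hzy' : z ≠ starInv y) :
    2 * Real.pi * (inner ℝ (KD y z) y : ℝ) =
      (inner ℝ (perp z) y : ℝ) * (‖y‖ ^ 2 - 1) * ((‖z‖ ^ 2)⁻¹ - 1) /
        (‖y - z‖ ^ 2 * ‖y - starInv z‖ ^ 2) := by
  have hn : ∀ w : ℂ, ‖w‖^2 = w.re^2 + w.im^2 := fun w => by
    rw [← Complex.normSq_eq_norm_sq, Complex.normSq_apply]; ring
  -- nonvanishing of the three denominators, in coordinates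
  have hr : z.re^2 + z.im^2 ≠ 0 := by
    have : Complex.normSq z ≠ 0 := by simpa using hz0
    simpa [Complex.normSq_apply, pow_two] using this
  have h1 : (y.re - z.re)^2 + (y.im - z.im)^2 ≠ 0 := by
    have hyz : y - z ≠ 0 := sub_ne_zero.2 (Ne.symm hzy)
    have : Complex.normSq (y - z) ≠ 0 := by simpa using hyz
    simpa [Complex.normSq_apply, Complex.sub_re, Complex.sub_im, pow_two] using this
  have hys : y - starInv z ≠ 0 := by
    refine sub_ne_zero.2 fun h => hzy' ?_
    rw [h, starInv_involutive hz0]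
  have hre : (starInv z).re = z.re/(z.re^2+z.im^2) := by
    rw [starInv, hn z]
    rw [Complex.real_smul, Complex.re_ofReal_mul, inv_mul_eq_div]
  have him : (starInv z).im = z.im/(z.re^2+z.im^2) := by
    rw [starInv, hn z]
    rw [Complex.real_smul, Complex.im_ofReal_mul, inv_mul_eq_div]
  have h2 : (y.re - z.re/(z.re^2+z.im^2))^2 + (y.im - z.im/(z.re^2+z.im^2))^2 ≠ 0 := by
    have h : Complex.normSq (y - starInv z) ≠ 0 := by simpa using hys
    simpa only [Complex.normSq_apply, Complex.sub_re, Complex.sub_im, hre, him, ← pow_two]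
      using h
  have hπ : (2 * Real.pi) ≠ 0 := by positivity
  have hcanc : ∀ P Q u v : ℝ,
      2 * Real.pi * (P / (2 * Real.pi) * u - -(Q / (2 * Real.pi)) * v) = P * u + Q * v := by
    intro P Q u v; field_simp; ring
  rw [KD, if_neg hz0]
  simp only [Complex.inner, perp, starInv, Complex.real_smul, Complex.mul_re, Complex.mul_im,
    Complex.ofReal_re, Complex.ofReal_im, Complex.sub_re, Complex.sub_im, Complex.I_re,
    Complex.I_im, Complex.conj_re, Complex.conj_im, hn, zero_mul, mul_zero, sub_zero,
    zero_sub, add_zero, zero_add, one_mul, mul_one, neg_neg, neg_sub, inv_mul_eq_div]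
  have hcanc' : ∀ P Q u v : ℝ,
      2 * Real.pi * (u * (P / (2 * Real.pi)) - v * -(Q / (2 * Real.pi))) = u * P + v * Q := by
    intro P Q u v
    rw [show u * (P / (2 * Real.pi)) - v * -(Q / (2 * Real.pi)) = (u * P + v * Q) / (2 * Real.pi) by ring]
    field_simp
  rw [hcanc']
  linear_combination key_real_id y.re y.im z.re z.im hr h1 h2
end

section
/- Let C > 0, T > 0 and let f : [0,T] → [0,1] be a differentiable function with f(0) = 0 and f'(t) ≤ C h(f(t)) for all t ∈ [0,T]. Then f(t) = 0 for all t ∈ [0,T]. -/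
/-- `h(r) = r (1 + |log r|)`, with `h(0) = 0`. -/
noncomputable def h (r : ℝ) : ℝ := r * (1 + |Real.log r|)

/-- If `f : [0,T] → [0,1]` is differentiable with `f(0) = 0` and
`f'(t) ≤ C h(f(t))` on `[0,T]`, then `f ≡ 0` on `[0,T]`. -/
theorem osgood_zero (C T : ℝ) (hC : 0 < C) (hT : 0 < T) (f f' : ℝ → ℝ)
    (hmap : ∀ t ∈ Set.Icc (0 : ℝ) T, f t ∈ Set.Icc (0 : ℝ) 1)
    (hdiff : ∀ t ∈ Set.Icc (0 : ℝ) T, HasDerivAt f (f' t) t)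
    (h0 : f 0 = 0)
    (hineq : ∀ t ∈ Set.Icc (0 : ℝ) T, f' t ≤ C * h (f t)) :
    ∀ t ∈ Set.Icc (0 : ℝ) T, f t = 0 := by
  intro t0 ht0
  by_contra hne
  have ha : 0 < f t0 := lt_of_le_of_ne (hmap t0 ht0).1 (Ne.symm hne)
  set a := f t0 with ha_def
  -- the last zero before t0
  set S : Set ℝ := {t | t ∈ Set.Icc (0:ℝ) t0 ∧ f t = 0} with hS_def
  have hSne : S.Nonempty := ⟨0, ⟨le_refl 0, ht0.1⟩, h0⟩
  have hSbdd : BddAbove S := ⟨t0, fun x hx => hx.1.2⟩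
  set t1 := sSup S with ht1_def
  have ht1S : t1 ∈ closure S := csSup_mem_closure hSne hSbdd
  have hSsub : S ⊆ Set.Icc (0:ℝ) t0 := fun x hx => hx.1
  have ht1Icc : t1 ∈ Set.Icc (0:ℝ) t0 := by
    have := closure_mono hSsub ht1S
    rwa [closure_Icc] at this
  have ht1T : t1 ∈ Set.Icc (0:ℝ) T := ⟨ht1Icc.1, le_trans ht1Icc.2 ht0.2⟩
  have hcont1 : ContinuousAt f t1 := (hdiff t1 ht1T).continuousAt
  have hft1 : f t1 = 0 := by
    have h1 : f t1 ∈ closure (f '' S) :=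
      (hcont1.continuousWithinAt).mem_closure_image ht1S
    have h2 : f '' S ⊆ {(0:ℝ)} := by
      rintro y ⟨x, hx, rfl⟩; exact hx.2
    have h3 : closure (f '' S) ⊆ {(0:ℝ)} := by
      have := closure_mono h2
      rwa [closure_singleton] at this
    exact h3 h1
  have ht1lt : t1 < t0 := by
    rcases lt_or_eq_of_le ht1Icc.2 with h | h
    · exact h
    · rw [h] at hft1; exact absurd hft1 hne
  -- f is positive on (t1, t0]
  have hpos : ∀ u, t1 < u → u ≤ t0 → 0 < f u := by
    intro u hu1 hu2
    have huT : u ∈ Set.Icc (0:ℝ) T :=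
      ⟨le_trans ht1Icc.1 hu1.le, le_trans hu2 ht0.2⟩
    rcases lt_or_eq_of_le (hmap u huT).1 with h | h
    · exact h
    · exfalso
      have : u ∈ S := ⟨⟨le_trans ht1Icc.1 hu1.le, hu2⟩, h.symm⟩
      exact absurd (le_csSup hSbdd this) (not_le.mpr hu1)
  -- constants
  have hloga : Real.log a ≤ 0 := Real.log_nonpos ha.le (hmap t0 ht0).2
  set K := Real.exp (C * T) * (1 - Real.log a) with hK_def
  have hK1 : (1:ℝ) ≤ 1 - Real.log a := by linarith
  have hKpos : 0 < K := mul_pos (Real.exp_pos _) (by linarith)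
  set δ := Real.exp (-K) with hδ_def
  have hδpos : 0 < δ := Real.exp_pos _
  -- pick s close to t1 with f s < δ
  obtain ⟨η, hηpos, hη⟩ := Metric.continuousAt_iff.mp hcont1 δ hδpos
  set s := min (t1 + η / 2) t0 with hs_def
  have hst1 : t1 < s := lt_min (by linarith) ht1lt
  have hst0 : s ≤ t0 := min_le_right _ _
  have hfs_lt : f s < δ := by
    have hd : dist s t1 < η := by
      rw [Real.dist_eq, abs_of_pos (by linarith : (0:ℝ) < s - t1)]
      have : s ≤ t1 + η / 2 := min_le_left _ _
      linarith
    have := hη hd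
    rw [Real.dist_eq, hft1, sub_zero] at this
    exact lt_of_le_of_lt (le_abs_self _) this
  have hfs_pos : 0 < f s := hpos s hst1 hst0
  -- the auxiliary function
  set g : ℝ → ℝ := fun t => C * t + Real.log (1 - Real.log (f t)) with hg_def
  have hbasic : ∀ t ∈ Set.Icc s t0, 0 < f t ∧ Real.log (f t) ≤ 0 ∧
      t ∈ Set.Icc (0:ℝ) T := by
    intro t ht
    have hft : 0 < f t := hpos t (lt_of_lt_of_le hst1 ht.1) ht.2
    have htT : t ∈ Set.Icc (0:ℝ) T :=
      ⟨le_trans ht1Icc.1 (le_trans hst1.le ht.1), le_trans ht.2 ht0.2⟩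
    exact ⟨hft, Real.log_nonpos hft.le (hmap t htT).2, htT⟩
  have hderiv : ∀ t ∈ Set.Icc s t0,
      HasDerivAt g (C + (-(f' t / f t)) / (1 - Real.log (f t))) t := by
    intro t ht
    obtain ⟨hft, hlog, htT⟩ := hbasic t ht
    have hD : (0:ℝ) < 1 - Real.log (f t) := by linarith
    have d1 : HasDerivAt (fun u => Real.log (f u)) (f' t / f t) t :=
      (hdiff t htT).log hft.ne'
    have d2 : HasDerivAt (fun u => 1 - Real.log (f u)) (-(f' t / f t)) t :=
      d1.const_sub 1
    have d3 : HasDerivAt (fun u => Real.log (1 - Real.log (f u)))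
        ((-(f' t / f t)) / (1 - Real.log (f t))) t := d2.log hD.ne'
    have d4 : HasDerivAt (fun u => C * u) C t := by
      simpa using (hasDerivAt_id t).const_mul C
    exact d4.add d3
  have hderiv_nonneg : ∀ t ∈ Set.Icc s t0,
      0 ≤ C + (-(f' t / f t)) / (1 - Real.log (f t)) := by
    intro t ht
    obtain ⟨hft, hlog, htT⟩ := hbasic t ht
    have hD : (0:ℝ) < 1 - Real.log (f t) := by linarith
    have hkey : f' t ≤ C * (f t * (1 - Real.log (f t))) := by
      have := hineq t htT
      rwa [h, abs_of_nonpos hlog] at this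
    have h1 : f' t / f t ≤ C * (1 - Real.log (f t)) := by
      rw [div_le_iff₀ hft]
      nlinarith
    have h2 : (f' t / f t) / (1 - Real.log (f t)) ≤ C := by
      rw [div_le_iff₀ hD]
      linarith
    have : -(f' t / f t) / (1 - Real.log (f t)) =
        -((f' t / f t) / (1 - Real.log (f t))) := by ring
    rw [this]
    linarith
  -- g is monotone on [s, t0]
  have hmono : MonotoneOn g (Set.Icc s t0) := by
    apply monotoneOn_of_deriv_nonneg (convex_Icc s t0)
    · exact fun t ht => ((hderiv t ht).continuousAt).continuousWithinAt
    · intro t ht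
      rw [interior_Icc] at ht
      exact (hderiv t (Set.mem_Icc_of_Ioo ht)).differentiableAt.differentiableWithinAt
    · intro t ht
      rw [interior_Icc] at ht
      rw [(hderiv t (Set.mem_Icc_of_Ioo ht)).deriv]
      exact hderiv_nonneg t (Set.mem_Icc_of_Ioo ht)
  have hgs : g s ≤ g t0 :=
    hmono (Set.left_mem_Icc.mpr hst0) (Set.right_mem_Icc.mpr hst0) hst0
  -- derive the contradiction
  have hDs : (0:ℝ) < 1 - Real.log (f s) := by
    have := (hbasic s (Set.left_mem_Icc.mpr hst0)).2.1
    linarith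
  have hlogK : Real.log K = C * T + Real.log (1 - Real.log a) := by
    rw [hK_def, Real.log_mul (Real.exp_pos _).ne' (by linarith), Real.log_exp]
  have hs0 : 0 ≤ s := le_trans ht1Icc.1 hst1.le
  have hchain : Real.log (1 - Real.log (f s)) ≤ Real.log K := by
    have h1 : C * s + Real.log (1 - Real.log (f s)) ≤
        C * t0 + Real.log (1 - Real.log a) := hgs
    have h2 : C * t0 ≤ C * T := by
      exact mul_le_mul_of_nonneg_left ht0.2 hC.le
    have h3 : 0 ≤ C * s := mul_nonneg hC.le hs0
    rw [hlogK]
    linarith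
  have hle : 1 - Real.log (f s) ≤ K := by
    have := Real.exp_le_exp.mpr hchain
    rwa [Real.exp_log hDs, Real.exp_log hKpos] at this
  have hgt : -K > Real.log (f s) := by
    calc Real.log (f s) < Real.log δ := Real.log_lt_log hfs_pos hfs_lt
    _ = -K := Real.log_exp _
  linarith
end

section
/- Let C > 0, a < b, and let g : [a,b) → (0,1) be a differentiable function with |g'(t)| ≤ C h(g(t)) for all t ∈ [a,b). Then for all t ∈ [a,b), g(t) ≥ e^{1 − exp(C(t−a))} · g(a)^{exp(C(t−a))}. -/
/-- If `g : [a,b) → (0,1)` is differentiable with `|g'(t)| ≤ C h(g(t))` on `[a,b)`,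
then `g(t) ≥ e^{1 − exp(C(t−a))} · g(a)^{exp(C(t−a))}` on `[a,b)`. -/
theorem gronwall_log_lower_bound (C a b : ℝ) (hC : 0 < C) (hab : a < b) (g g' : ℝ → ℝ)
    (hmap : ∀ t ∈ Set.Ico a b, g t ∈ Set.Ioo (0 : ℝ) 1)
    (hdiff : ∀ t ∈ Set.Ico a b, HasDerivAt g (g' t) t)
    (hineq : ∀ t ∈ Set.Ico a b, |g' t| ≤ C * h (g t)) :
    ∀ t ∈ Set.Ico a b,
      g t ≥ Real.exp (1 - Real.exp (C * (t - a))) * g a ^ Real.exp (C * (t - a)) := by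
  intro t ht
  obtain ⟨hta, htb⟩ := ht
  set f : ℝ → ℝ := fun s => 1 - Real.log (g s) with hf
  have hsub : Set.Icc a t ⊆ Set.Ico a b := fun s hs => ⟨hs.1, lt_of_le_of_lt hs.2 htb⟩
  have hfpos : ∀ s ∈ Set.Ico a b, 0 < f s := by
    intro s hs
    have := (hmap s hs)
    have hlog : Real.log (g s) < 0 := Real.log_neg this.1 this.2
    simp only [hf]; linarith
  have hderiv : ∀ s ∈ Set.Ico a b, HasDerivAt f (-(g' s / g s)) s := by
    intro s hs
    exact ((hdiff s hs).log (ne_of_gt (hmap s hs).1)).const_sub 1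
  have hderiv' : ∀ s ∈ Set.Ico a t, HasDerivWithinAt f (-(g' s / g s)) (Set.Ici s) s := by
    intro s hs
    exact (hderiv s ⟨hs.1, lt_trans hs.2 htb⟩).hasDerivWithinAt
  have hcont : ContinuousOn f (Set.Icc a t) := by
    intro s hs
    exact ((hderiv s (hsub hs)).continuousAt).continuousWithinAt
  have hbound : ∀ s ∈ Set.Ico a t, ‖-(g' s / g s)‖ ≤ C * ‖f s‖ + 0 := by
    intro s hs
    have hs' : s ∈ Set.Ico a b := ⟨hs.1, lt_trans hs.2 htb⟩
    have hg := hmap s hs'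
    have hgpos := hg.1
    have hlog : Real.log (g s) < 0 := Real.log_neg hg.1 hg.2
    have h1 : |g' s| ≤ C * (g s * (1 - Real.log (g s))) := by
      have := hineq s hs'
      rwa [h, abs_of_neg hlog] at this
      <;> ring_nf
    rw [norm_neg, Real.norm_eq_abs, abs_div, abs_of_pos hgpos]
    rw [Real.norm_eq_abs, abs_of_pos (hfpos s hs')]
    rw [div_le_iff₀ hgpos, add_zero]
    calc |g' s| ≤ C * (g s * (1 - Real.log (g s))) := h1
      _ = C * f s * g s := by simp only [hf]; ring
  have hkey := norm_le_gronwallBound_of_norm_deriv_right_le (δ := f a) (K := C) (ε := 0)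
    hcont hderiv' (le_of_eq (abs_of_pos (hfpos a ⟨le_refl a, lt_of_le_of_lt hta htb⟩)))
    hbound t ⟨hta, le_refl t⟩
  rw [gronwallBound_ε0] at hkey
  have hft : f t ≤ ‖f t‖ := le_abs_self _
  have hmain : 1 - Real.log (g t) ≤ (1 - Real.log (g a)) * Real.exp (C * (t - a)) :=
    le_trans hft hkey
  have hga : 0 < g a := (hmap a ⟨le_refl a, lt_of_le_of_lt hta htb⟩).1
  have hgt : 0 < g t := (hmap t ⟨hta, htb⟩).1
  rw [ge_iff_le, Real.rpow_def_of_pos hga, ← Real.exp_add, ← Real.exp_log hgt]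
  apply Real.exp_le_exp.mpr
  nlinarith [Real.exp_pos (C * (t - a))]
end

section
/- For every α ∈ [1/2, 1) there exists a constant C > 0 such that for all d > 0 and all points x, ỹ, y ∈ ℝ² with |y − ỹ| ≤ d/2 and |x − ỹ| ≤ 5d, one has |x − y|^{2α} ∫_{B(ỹ,6d)} |y − z|^{−1} |z − x|^{−2α} dz ≤ C d, where B(ỹ,6d) is the open ball of center ỹ and radius 6d and the integral is with respect to two-dimensional Lebesgue measure. -/
open MeasureTheory

open MeasureTheory Set Metric
open scoped ENNReal NNReal


lemma pi_coe : ((NNReal.pi : ℝ≥0∞)) = ENNReal.ofReal Real.pi := by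
  rw [← NNReal.coe_real_pi, ENNReal.ofReal_coe_nnreal]

lemma rpow_ball_lintegral (s : ℝ) (hs0 : 0 < s) (hs2 : s < 2) (R : ℝ) (hR : 0 < R) (c : ℂ) :
    ∫⁻ z in Metric.ball c R, ENNReal.ofReal (‖z - c‖ ^ (-s)) ≤
      ENNReal.ofReal (2 * Real.pi / (2 - s) * R ^ (2 - s)) := by
  have hmeas : Measurable fun z : ℂ => ‖z - c‖ ^ (-s) := by fun_prop
  set μ := volume.restrict (Metric.ball c R) with hμ
  clear_value μ
  have hnn : 0 ≤ᵐ[μ] fun z : ℂ => ‖z - c‖ ^ (-s) :=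
    Filter.Eventually.of_forall fun z => Real.rpow_nonneg (norm_nonneg _) _
  rw [MeasureTheory.lintegral_eq_lintegral_meas_lt μ hnn hmeas.aemeasurable]
  set t₀ : ℝ := R ^ (-s) with ht₀def
  clear_value t₀
  have ht₀ : 0 < t₀ := by rw [ht₀def]; exact Real.rpow_pos_of_pos hR _
  have hsplit : Ioc (0:ℝ) t₀ ∪ Ioi t₀ = Ioi 0 := Ioc_union_Ioi_eq_Ioi ht₀.le
  have hs2' : (0:ℝ) < 2 - s := by linarith
  have h1 : R ^ (2:ℕ) * t₀ = R ^ (2 - s) := by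
    rw [ht₀def, ← Real.rpow_natCast R 2, ← Real.rpow_add hR,
      show ((2:ℕ):ℝ) + -s = 2 - s by push_cast; ring]
  have h3 : (-2/s) + 1 = (s - 2)/s := by
    field_simp
    ring
  have h2 : t₀ ^ ((-2/s) + 1) = R ^ (2 - s) := by
    rw [ht₀def, ← Real.rpow_mul hR.le]
    congr 1
    field_simp
    ring
  calc ∫⁻ t in Ioi (0:ℝ), μ {a | t < ‖a - c‖ ^ (-s)}
      ≤ (∫⁻ t in Ioc (0:ℝ) t₀, μ {a | t < ‖a - c‖ ^ (-s)})
        + ∫⁻ t in Ioi t₀, μ {a | t < ‖a - c‖ ^ (-s)} := by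
        rw [← hsplit]
        exact lintegral_union_le _ _ _
    _ ≤ ENNReal.ofReal (Real.pi * R ^ (2:ℕ) * t₀)
        + ENNReal.ofReal (Real.pi * (- t₀ ^ ((-2/s) + 1) / ((-2/s) + 1))) := by
        gcongr ?_ + ?_
        · -- constant bound on Ioc
          calc ∫⁻ t in Ioc (0:ℝ) t₀, μ {a | t < ‖a - c‖ ^ (-s)}
              ≤ ∫⁻ _t in Ioc (0:ℝ) t₀, ENNReal.ofReal (Real.pi * R ^ (2:ℕ)) := by
                apply setLIntegral_mono measurable_const
                intro t _
                calc μ {a | t < ‖a - c‖ ^ (-s)} ≤ μ univ := measure_mono (subset_univ _)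
                  _ = volume (Metric.ball c R) := by rw [hμ, Measure.restrict_apply_univ]
                  _ = ENNReal.ofReal R ^ 2 * NNReal.pi := Complex.volume_ball c R
                  _ = ENNReal.ofReal (Real.pi * R ^ (2:ℕ)) := by
                      rw [pi_coe, ← ENNReal.ofReal_pow hR.le,
                        ← ENNReal.ofReal_mul (by positivity), mul_comm]
            _ = ENNReal.ofReal (Real.pi * R ^ (2:ℕ)) * volume (Ioc (0:ℝ) t₀) :=
                setLIntegral_const _ _
            _ = ENNReal.ofReal (Real.pi * R ^ (2:ℕ) * t₀) := by
                rw [Real.volume_Ioc, sub_zero, ← ENNReal.ofReal_mul (by positivity)]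
        · -- tail bound on Ioi t₀
          have hexp : -2/s < -1 := by
            rw [div_lt_iff₀ hs0]
            nlinarith
          calc ∫⁻ t in Ioi t₀, μ {a | t < ‖a - c‖ ^ (-s)}
              ≤ ∫⁻ t in Ioi t₀, ENNReal.ofReal (Real.pi * t ^ (-2/s)) := by
                apply setLIntegral_mono (by fun_prop)
                intro t ht
                have ht' : (0:ℝ) < t := lt_trans ht₀ ht
                have hsub : {a : ℂ | t < ‖a - c‖ ^ (-s)} ⊆ Metric.ball c (t ^ (-1/s)) := by
                  intro a ha
                  simp only [mem_setOf_eq] at ha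
                  have hu : 0 < ‖a - c‖ := by
                    rcases eq_or_lt_of_le (norm_nonneg (a - c)) with h | h
                    · exfalso
                      rw [← h, Real.zero_rpow (neg_ne_zero.2 hs0.ne')] at ha
                      linarith
                    · exact h
                  rw [Metric.mem_ball, dist_eq_norm]
                  have key : (‖a - c‖ ^ (-s)) ^ (-1/s) < t ^ (-1/s) :=
                    Real.rpow_lt_rpow_of_neg ht' ha (div_neg_of_neg_of_pos (by norm_num) hs0)
                  calc ‖a - c‖ = (‖a - c‖ ^ (-s)) ^ (-1/s) := by
                        rw [← Real.rpow_mul (norm_nonneg _)]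
                        rw [show -s * (-1/s) = 1 by field_simp]
                        exact (Real.rpow_one _).symm
                    _ < t ^ (-1/s) := key
                calc μ {a : ℂ | t < ‖a - c‖ ^ (-s)}
                    ≤ volume {a : ℂ | t < ‖a - c‖ ^ (-s)} := by
                      rw [hμ]; exact Measure.restrict_apply_le _ _
                  _ ≤ volume (Metric.ball c (t ^ (-1/s))) := measure_mono hsub
                  _ = ENNReal.ofReal (t ^ (-1/s)) ^ 2 * NNReal.pi := Complex.volume_ball _ _
                  _ = ENNReal.ofReal (Real.pi * t ^ (-2/s)) := by
                      rw [pi_coe, ← ENNReal.ofReal_pow (by positivity),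
                        ← ENNReal.ofReal_mul (by positivity), mul_comm]
                      congr 2
                      rw [← Real.rpow_natCast (t ^ (-1/s)) 2, ← Real.rpow_mul ht'.le]
                      norm_num
                      congr 1
                      ring
            _ ≤ ENNReal.ofReal (Real.pi * (- t₀ ^ ((-2/s) + 1) / ((-2/s) + 1))) := by
                have hint : IntegrableOn (fun t : ℝ => Real.pi * t ^ (-2/s)) (Ioi t₀) :=
                  (integrableOn_Ioi_rpow_of_lt hexp ht₀).const_mul _
                rw [← MeasureTheory.ofReal_integral_eq_lintegral_ofReal hint
                  ((ae_restrict_iff' measurableSet_Ioi).2 (Filter.Eventually.of_forall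
                    fun t ht => mul_nonneg Real.pi_pos.le
                      (Real.rpow_nonneg (le_of_lt (lt_trans ht₀ ht)) _)))]
                apply ENNReal.ofReal_le_ofReal
                rw [integral_const_mul, integral_Ioi_rpow_of_lt hexp ht₀]
    _ ≤ ENNReal.ofReal (2 * Real.pi / (2 - s) * R ^ (2 - s)) := by
        rw [← ENNReal.ofReal_add (by positivity) ?_]
        · apply ENNReal.ofReal_le_ofReal
          apply le_of_eq
          rw [mul_assoc, h1, h2, h3]
          have hs2ne : s - 2 ≠ 0 := by linarith
          have h2sne : (2:ℝ) - s ≠ 0 := by linarith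
          field_simp
          ring
        · rw [h2, h3]
          apply mul_nonneg Real.pi_pos.le
          apply div_nonneg_iff.2
          refine Or.inr ⟨by simp [Real.rpow_nonneg hR.le], ?_⟩
          apply div_nonpos_of_nonpos_of_nonneg <;> linarith

/-- For every `α ∈ [1/2, 1)` there is `C > 0` such that for all `d > 0` and points
`x, ỹ, y` with `|y − ỹ| ≤ d/2` and `|x − ỹ| ≤ 5d`,
`|x − y|^{2α} ∫_{B(ỹ,6d)} |y − z|⁻¹ |z − x|^{−2α} dz ≤ C d`. -/
theorem near_corner_integral_bound (α : ℝ) (hα : α ∈ Set.Ico (1 / 2 : ℝ) 1) :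
    ∃ C : ℝ, 0 < C ∧ ∀ d : ℝ, 0 < d → ∀ x yt y : ℂ,
      ‖y - yt‖ ≤ d / 2 → ‖x - yt‖ ≤ 5 * d →
      ‖x - y‖ ^ (2 * α) * ∫ z in Metric.ball yt (6 * d), ‖y - z‖⁻¹ * ‖z - x‖ ^ (-(2 * α)) ≤
        C * d := by
  obtain ⟨hα1, hα2⟩ := hα
  set s : ℝ := 2 * α with hs
  have hs1 : 1 ≤ s := by rw [hs]; linarith
  have hs0 : 0 < s := by linarith
  have hs2 : s < 2 := by rw [hs]; linarith
  set K : ℝ := 2 * Real.pi / (2 - s) with hKdef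
  have hK : 0 < K := by
    rw [hKdef]
    have := Real.pi_pos
    apply div_pos <;> linarith
  refine ⟨56 * Real.pi + 11 * K + 1, by linarith [Real.pi_pos], ?_⟩
  intro d hd x yt y hyyt hxyt
  have hmeas : Measurable fun z : ℂ => ‖y - z‖⁻¹ * ‖z - x‖ ^ (-s) := by fun_prop
  have hnn : ∀ z : ℂ, 0 ≤ ‖y - z‖⁻¹ * ‖z - x‖ ^ (-s) := fun z =>
    mul_nonneg (inv_nonneg.2 (norm_nonneg _)) (Real.rpow_nonneg (norm_nonneg _) _)
  rw [integral_eq_lintegral_of_nonneg_ae (Filter.Eventually.of_forall hnn)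
    hmeas.aestronglyMeasurable]
  set r : ℝ := ‖x - y‖ with hrdef
  rcases eq_or_lt_of_le (norm_nonneg (x - y)) with hr0 | hr0
  · -- degenerate case r = 0
    have hr : r = 0 := by rw [hrdef, ← hr0]
    rw [hr, Real.zero_rpow hs0.ne', zero_mul]
    have hC : (0:ℝ) < 56 * Real.pi + 11 * K + 1 := by linarith [Real.pi_pos]
    exact (mul_pos hC hd).le
  · -- main case
    rw [← hrdef] at hr0
    set ρ : ℝ := r / 2 with hρdef
    have hρ : 0 < ρ := by rw [hρdef]; linarith
    have hrd : r ≤ 11 / 2 * d := by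
      have h1 : ‖x - y‖ ≤ ‖x - yt‖ + ‖yt - y‖ := by
        calc ‖x - y‖ = ‖(x - yt) + (yt - y)‖ := by ring_nf
          _ ≤ ‖x - yt‖ + ‖yt - y‖ := norm_add_le _ _
      rw [norm_sub_rev yt y] at h1
      rw [hrdef]; linarith
    have hρd : ρ ≤ 11 / 4 * d := by rw [hρdef]; linarith
    -- lintegral bound
    set U : Set ℂ := Metric.ball yt (6 * d) \ Metric.ball x ρ with hU
    set V : Set ℂ := Metric.ball x ρ with hV
    have hUV : Metric.ball yt (6 * d) ⊆ U ∪ V := by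
      rw [hU, hV, diff_union_self]
      exact subset_union_left
    have hUsub : U ⊆ Metric.ball y (7 * d) := by
      intro z hz
      have hz1 : z ∈ Metric.ball yt (6 * d) := hz.1
      rw [Metric.mem_ball, dist_eq_norm] at hz1 ⊢
      have : ‖z - y‖ ≤ ‖z - yt‖ + ‖yt - y‖ := by
        calc ‖z - y‖ = ‖(z - yt) + (yt - y)‖ := by ring_nf
          _ ≤ ‖z - yt‖ + ‖yt - y‖ := norm_add_le _ _
      rw [norm_sub_rev yt y] at this
      linarith
    -- bound over U
    have hUbound : ∫⁻ z in U, ENNReal.ofReal (‖y - z‖⁻¹ * ‖z - x‖ ^ (-s))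
        ≤ ENNReal.ofReal (ρ ^ (-s) * (2 * Real.pi * (7 * d))) := by
      calc ∫⁻ z in U, ENNReal.ofReal (‖y - z‖⁻¹ * ‖z - x‖ ^ (-s))
          ≤ ∫⁻ z in U, ENNReal.ofReal (ρ ^ (-s)) * ENNReal.ofReal (‖z - y‖ ^ (-(1:ℝ))) := by
            apply setLIntegral_mono (by fun_prop)
            intro z hz
            have hzx : ρ ≤ ‖z - x‖ := by
              have h2 := hz.2
              simp only [Metric.mem_ball, dist_eq_norm, not_lt] at h2
              exact h2
            rw [← ENNReal.ofReal_mul (Real.rpow_nonneg hρ.le _)]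
            apply ENNReal.ofReal_le_ofReal
            rw [Real.rpow_neg_one, norm_sub_rev z y, mul_comm]
            exact mul_le_mul_of_nonneg_right
              (Real.rpow_le_rpow_of_nonpos hρ hzx (neg_nonpos.2 hs0.le))
              (inv_nonneg.2 (norm_nonneg _))
        _ = ENNReal.ofReal (ρ ^ (-s)) * ∫⁻ z in U, ENNReal.ofReal (‖z - y‖ ^ (-(1:ℝ))) :=
            lintegral_const_mul _ (by fun_prop)
        _ ≤ ENNReal.ofReal (ρ ^ (-s))
            * ∫⁻ z in Metric.ball y (7 * d), ENNReal.ofReal (‖z - y‖ ^ (-(1:ℝ))) :=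
            mul_le_mul_right (lintegral_mono_set hUsub) _
        _ ≤ ENNReal.ofReal (ρ ^ (-s))
            * ENNReal.ofReal (2 * Real.pi / (2 - 1) * (7 * d) ^ ((2:ℝ) - 1)) :=
            mul_le_mul_right
              (rpow_ball_lintegral 1 one_pos (by norm_num) (7 * d) (by linarith) y) _
        _ = ENNReal.ofReal (ρ ^ (-s) * (2 * Real.pi * (7 * d))) := by
            rw [← ENNReal.ofReal_mul (Real.rpow_nonneg hρ.le _)]
            congr 1
            norm_num
    -- bound over V
    have hVbound : ∫⁻ z in V, ENNReal.ofReal (‖y - z‖⁻¹ * ‖z - x‖ ^ (-s))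
        ≤ ENNReal.ofReal (ρ⁻¹ * (K * ρ ^ (2 - s))) := by
      calc ∫⁻ z in V, ENNReal.ofReal (‖y - z‖⁻¹ * ‖z - x‖ ^ (-s))
          ≤ ∫⁻ z in V, ENNReal.ofReal ρ⁻¹ * ENNReal.ofReal (‖z - x‖ ^ (-s)) := by
            apply setLIntegral_mono (by fun_prop)
            intro z hz
            simp only [hV, Metric.mem_ball, dist_eq_norm] at hz
            have htri : ‖x - y‖ ≤ ‖x - z‖ + ‖z - y‖ := by
              calc ‖x - y‖ = ‖(x - z) + (z - y)‖ := by ring_nf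
                _ ≤ ‖x - z‖ + ‖z - y‖ := norm_add_le _ _
            rw [norm_sub_rev x z] at htri
            have hyz : ρ ≤ ‖y - z‖ := by
              rw [norm_sub_rev y z]
              rw [hρdef] at hz ⊢
              rw [← hrdef] at htri
              linarith
            rw [← ENNReal.ofReal_mul (inv_nonneg.2 hρ.le)]
            apply ENNReal.ofReal_le_ofReal
            exact mul_le_mul_of_nonneg_right (inv_anti₀ hρ hyz)
              (Real.rpow_nonneg (norm_nonneg _) _)
        _ = ENNReal.ofReal ρ⁻¹ * ∫⁻ z in V, ENNReal.ofReal (‖z - x‖ ^ (-s)) :=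
            lintegral_const_mul _ (by fun_prop)
        _ ≤ ENNReal.ofReal ρ⁻¹ * ENNReal.ofReal (2 * Real.pi / (2 - s) * ρ ^ (2 - s)) :=
            mul_le_mul_right (rpow_ball_lintegral s hs0 hs2 ρ hρ x) _
        _ = ENNReal.ofReal (ρ⁻¹ * (K * ρ ^ (2 - s))) := by
            rw [← ENNReal.ofReal_mul (inv_nonneg.2 hρ.le), hKdef]
    -- combine
    have hI : ∫⁻ z in Metric.ball yt (6 * d), ENNReal.ofReal (‖y - z‖⁻¹ * ‖z - x‖ ^ (-s))
        ≤ ENNReal.ofReal (ρ ^ (-s) * (2 * Real.pi * (7 * d)) + ρ⁻¹ * (K * ρ ^ (2 - s))) := by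
      calc ∫⁻ z in Metric.ball yt (6 * d), ENNReal.ofReal (‖y - z‖⁻¹ * ‖z - x‖ ^ (-s))
          ≤ ∫⁻ z in U ∪ V, ENNReal.ofReal (‖y - z‖⁻¹ * ‖z - x‖ ^ (-s)) :=
            lintegral_mono_set hUV
        _ ≤ (∫⁻ z in U, ENNReal.ofReal (‖y - z‖⁻¹ * ‖z - x‖ ^ (-s)))
            + ∫⁻ z in V, ENNReal.ofReal (‖y - z‖⁻¹ * ‖z - x‖ ^ (-s)) :=
            lintegral_union_le _ _ _
        _ ≤ ENNReal.ofReal (ρ ^ (-s) * (2 * Real.pi * (7 * d)))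
            + ENNReal.ofReal (ρ⁻¹ * (K * ρ ^ (2 - s))) := add_le_add hUbound hVbound
        _ = ENNReal.ofReal (ρ ^ (-s) * (2 * Real.pi * (7 * d)) + ρ⁻¹ * (K * ρ ^ (2 - s))) := by
            rw [← ENNReal.ofReal_add (by positivity) (by positivity)]
    have hItoReal : (∫⁻ z in Metric.ball yt (6 * d),
        ENNReal.ofReal (‖y - z‖⁻¹ * ‖z - x‖ ^ (-s))).toReal
        ≤ ρ ^ (-s) * (2 * Real.pi * (7 * d)) + ρ⁻¹ * (K * ρ ^ (2 - s)) := by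
      refine le_trans (ENNReal.toReal_mono ENNReal.ofReal_ne_top hI) ?_
      rw [ENNReal.toReal_ofReal (by positivity)]
    -- final real arithmetic
    have h2ρ : r = 2 * ρ := by rw [hρdef]; ring
    have hrs : r ^ s = 2 ^ s * ρ ^ s := by
      rw [h2ρ, Real.mul_rpow (by norm_num) hρ.le]
    have hcancel : ρ ^ s * ρ ^ (-s) = 1 := by
      rw [← Real.rpow_add hρ, add_neg_cancel, Real.rpow_zero]
    have hcancel2 : ρ ^ s * ρ ^ (2 - s) = ρ * ρ := by
      rw [← Real.rpow_add hρ, show s + (2 - s) = (2:ℝ) by ring,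
        show (2:ℝ) = ((2:ℕ):ℝ) by norm_num, Real.rpow_natCast]
      ring
    have h2sle : (2:ℝ) ^ s ≤ 4 := by
      calc (2:ℝ) ^ s ≤ 2 ^ (2:ℝ) :=
            Real.rpow_le_rpow_of_exponent_le (by norm_num) hs2.le
        _ = 4 := by
            rw [show (2:ℝ) = ((2:ℕ):ℝ) by norm_num, Real.rpow_natCast]; norm_num
    have h2spos : (0:ℝ) < 2 ^ s := Real.rpow_pos_of_pos (by norm_num) s
    have e1 : r ^ s * (ρ ^ (-s) * (2 * Real.pi * (7 * d))) = 2 ^ s * (14 * Real.pi * d) := by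
      rw [hrs, show (2:ℝ) ^ s * ρ ^ s * (ρ ^ (-s) * (2 * Real.pi * (7 * d)))
        = 2 ^ s * (2 * Real.pi * (7 * d)) * (ρ ^ s * ρ ^ (-s)) by ring, hcancel]
      ring
    have e2 : r ^ s * (ρ⁻¹ * (K * ρ ^ (2 - s))) = 2 ^ s * K * ρ := by
      rw [hrs, show (2:ℝ) ^ s * ρ ^ s * (ρ⁻¹ * (K * ρ ^ (2 - s)))
        = 2 ^ s * K * ((ρ ^ s * ρ ^ (2 - s)) * ρ⁻¹) by ring, hcancel2]
      field_simp [hρ.ne']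
    calc r ^ s * (∫⁻ z in Metric.ball yt (6 * d),
          ENNReal.ofReal (‖y - z‖⁻¹ * ‖z - x‖ ^ (-s))).toReal
        ≤ r ^ s * (ρ ^ (-s) * (2 * Real.pi * (7 * d)) + ρ⁻¹ * (K * ρ ^ (2 - s))) :=
          mul_le_mul_of_nonneg_left hItoReal (Real.rpow_nonneg hr0.le s)
      _ = 2 ^ s * (14 * Real.pi * d) + 2 ^ s * K * ρ := by rw [mul_add, e1, e2]
      _ ≤ (56 * Real.pi + 11 * K + 1) * d := by
          have hb1 : (2:ℝ) ^ s * (14 * Real.pi * d) ≤ 4 * (14 * Real.pi * d) :=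
            mul_le_mul_of_nonneg_right h2sle (by positivity)
          have hb2 : (2:ℝ) ^ s * K * ρ ≤ 4 * K * (11 / 4 * d) := by
            apply mul_le_mul (mul_le_mul_of_nonneg_right h2sle hK.le) hρd hρ.le
            positivity
          nlinarith [Real.pi_pos, hK, hd]
end

section
/- For every α ∈ [1/2, 1) there exists a constant C > 0 such that for all d ∈ (0, 1/2] and all points x, y ∈ ℝ² and ỹ in the closed unit disk with |y − ỹ| ≤ d/2 and |x − ỹ| ≤ 5d, one has |x − y|^{2α−1} ∫_{D \ B(ỹ,6d)} |y − z|^{−1} |z − x|^{−2α} dz ≤ C (1 + |log d|), where D is the open unit disk, B(ỹ,6d) is the open ball of center ỹ and radius 6d, and the integral is with respect to two-dimensional Lebesgue measure. -/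
open MeasureTheory Set Metric Real

lemma radial_integral (p a b : ℝ) (ha : 0 < a) (hab : a ≤ b) :
    ∫ w in Metric.closedBall (0 : ℂ) b \ Metric.ball (0 : ℂ) a, ‖w‖ ^ p =
      (2 * π) * ∫ r in a..b, r * r ^ p := by
  set F : ℝ → ℝ := (Set.Icc a b).indicator (fun r => r ^ p) with hF
  have hmem : ∀ w : ℂ, w ∈ Metric.closedBall (0 : ℂ) b \ Metric.ball (0 : ℂ) a ↔ ‖w‖ ∈ Set.Icc a b := by
    intro w
    simp [Metric.mem_closedBall, Metric.mem_ball, dist_zero_right, Set.mem_Icc, not_lt, and_comm]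
  have hind : ∀ w : ℂ,
      (Metric.closedBall (0 : ℂ) b \ Metric.ball (0 : ℂ) a).indicator (fun w => ‖w‖ ^ p) w
        = F ‖w‖ := by
    intro w
    by_cases h : w ∈ Metric.closedBall (0 : ℂ) b \ Metric.ball (0 : ℂ) a
    · rw [Set.indicator_of_mem h, hF, Set.indicator_of_mem ((hmem w).1 h)]
    · rw [Set.indicator_of_notMem h, hF, Set.indicator_of_notMem (fun hc => h ((hmem w).2 hc))]
  have hmeas : MeasurableSet (Metric.closedBall (0 : ℂ) b \ Metric.ball (0 : ℂ) a) :=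
    measurableSet_closedBall.diff measurableSet_ball
  rw [← integral_indicator hmeas]
  calc ∫ w : ℂ, (Metric.closedBall (0 : ℂ) b \ Metric.ball (0 : ℂ) a).indicator
        (fun w => ‖w‖ ^ p) w = ∫ w : ℂ, F ‖w‖ := by simp_rw [hind]
    _ = (Module.finrank ℝ ℂ) • ((volume (Metric.ball (0:ℂ) 1)).toReal •
          ∫ r in Set.Ioi (0:ℝ), r ^ (Module.finrank ℝ ℂ - 1) • F r) :=
        integral_fun_norm_addHaar volume F
    _ = (2 * π) * ∫ r in a..b, r * r ^ p := by
        rw [Complex.finrank_real_complex]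
        have hvol : (volume (Metric.ball (0:ℂ) 1)).toReal = π := by
          simp [Complex.volume_ball]
        rw [hvol]
        have h1 : ∫ r in Set.Ioi (0:ℝ), r ^ (2 - 1) • F r = ∫ r in a..b, r * r ^ p := by
          have : ∀ r : ℝ, r ^ (2 - 1) • F r = (Set.Icc a b).indicator (fun r => r * r ^ p) r := by
            intro r
            rw [hF]
            by_cases h : r ∈ Set.Icc a b <;> simp [h]
          simp_rw [this]
          rw [setIntegral_indicator measurableSet_Icc]
          have hinter : Set.Ioi 0 ∩ Set.Icc a b = Set.Icc a b :=
            Set.inter_eq_self_of_subset_right ((Set.Icc_subset_Ioi_iff hab).2 ha)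
          rw [hinter, integral_Icc_eq_integral_Ioc,
            ← intervalIntegral.integral_of_le hab]
        rw [h1]
        rw [nsmul_eq_mul, smul_eq_mul]
        ring

lemma translate_integral (p a b : ℝ) (c : ℂ) :
    ∫ z in Metric.closedBall c b \ Metric.ball c a, ‖z - c‖ ^ p =
      ∫ w in Metric.closedBall (0 : ℂ) b \ Metric.ball (0 : ℂ) a, ‖w‖ ^ p := by
  have hmeas : MeasurableSet (Metric.closedBall (0:ℂ) b \ Metric.ball (0:ℂ) a) :=
    measurableSet_closedBall.diff measurableSet_ball
  have hmeas' : MeasurableSet (Metric.closedBall c b \ Metric.ball c a) :=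
    measurableSet_closedBall.diff measurableSet_ball
  rw [← integral_indicator hmeas, ← integral_indicator hmeas']
  have hkey : ∀ z : ℂ, (Metric.closedBall c b \ Metric.ball c a).indicator
      (fun z => ‖z - c‖ ^ p) z =
      (Metric.closedBall (0:ℂ) b \ Metric.ball (0:ℂ) a).indicator (fun w => ‖w‖ ^ p) (z - c) := by
    intro z
    have hmem : z ∈ Metric.closedBall c b \ Metric.ball c a ↔
        z - c ∈ Metric.closedBall (0:ℂ) b \ Metric.ball (0:ℂ) a := by
      simp [Metric.mem_closedBall, Metric.mem_ball, dist_eq_norm, sub_zero]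
    by_cases h : z ∈ Metric.closedBall c b \ Metric.ball c a
    · rw [Set.indicator_of_mem h, Set.indicator_of_mem (hmem.1 h)]
    · rw [Set.indicator_of_notMem h, Set.indicator_of_notMem (fun hc => h (hmem.2 hc))]
  simp_rw [hkey]
  exact integral_sub_right_eq_self
    ((Metric.closedBall (0:ℂ) b \ Metric.ball (0:ℂ) a).indicator (fun w => ‖w‖ ^ p)) c


/-- For every `α ∈ [1/2, 1)` there is `C > 0` such that for all `d ∈ (0, 1/2]`, points
`x, y` and `ỹ` in the closed unit disk with `|y − ỹ| ≤ d/2` and `|x − ỹ| ≤ 5d`,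
`|x − y|^{2α−1} ∫_{D \ B(ỹ,6d)} |y − z|⁻¹ |z − x|^{−2α} dz ≤ C (1 + |log d|)`. -/
theorem far_region_integral_bound (α : ℝ) (hα : α ∈ Set.Ico (1 / 2 : ℝ) 1) :
    ∃ C : ℝ, 0 < C ∧ ∀ d : ℝ, d ∈ Set.Ioc (0 : ℝ) (1 / 2) → ∀ x y : ℂ,
      ∀ yt ∈ Metric.closedBall (0 : ℂ) 1,
      ‖y - yt‖ ≤ d / 2 → ‖x - yt‖ ≤ 5 * d →
      ‖x - y‖ ^ (2 * α - 1) *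
          ∫ z in Metric.ball (0 : ℂ) 1 \ Metric.ball yt (6 * d),
            ‖y - z‖⁻¹ * ‖z - x‖ ^ (-(2 * α)) ≤
        C * (1 + |Real.log d|) := by
  obtain ⟨hα1, hα2⟩ := hα
  refine ⟨600, by norm_num, ?_⟩
  intro d hd x y yt hyt hyd hxd
  obtain ⟨hd0, hd2⟩ := hd
  have hyt1 : ‖yt‖ ≤ 1 := by simpa using hyt
  set a : ℝ := 6 * d with ha_def
  have ha : 0 < a := by positivity
  have ha3 : a ≤ 3 := by rw [ha_def]; linarith
  set p : ℝ := -1 - 2 * α with hp_def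
  set S : Set ℂ := Metric.ball (0 : ℂ) 1 \ Metric.ball yt a with hS_def
  set A : Set ℂ := Metric.closedBall yt 3 \ Metric.ball yt a with hA_def
  set g : ℂ → ℝ := fun z => 72 * ‖z - yt‖ ^ p with hg_def
  have hSmeas : MeasurableSet S := measurableSet_ball.diff measurableSet_ball
  -- basic facts about points in S / A
  have hrS : ∀ z ∈ S, a ≤ ‖z - yt‖ := by
    intro z hz
    have := hz.2
    rw [Metric.mem_ball, dist_eq_norm] at this
    exact not_lt.1 this
  have hrA : ∀ z ∈ A, a ≤ ‖z - yt‖ := by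
    intro z hz
    have := hz.2
    rw [Metric.mem_ball, dist_eq_norm] at this
    exact not_lt.1 this
  have hSA : S ⊆ A := by
    intro z hz
    refine ⟨?_, hz.2⟩
    rw [Metric.mem_closedBall, dist_eq_norm]
    have h1 : ‖z‖ < 1 := by simpa [Metric.mem_ball] using hz.1
    calc ‖z - yt‖ ≤ ‖z‖ + ‖yt‖ := norm_sub_le z yt
      _ ≤ 3 := by linarith
  -- integrability of g on A
  have hAcomp : IsCompact A := (isCompact_closedBall yt 3).diff Metric.isOpen_ball
  have hgA : IntegrableOn g A := by
    apply ContinuousOn.integrableOn_compact hAcomp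
    apply ContinuousOn.mul continuousOn_const
    apply ContinuousOn.rpow_const
      ((continuous_norm.comp (continuous_id.sub continuous_const)).continuousOn)
    intro z hz
    exact Or.inl (ne_of_gt (lt_of_lt_of_le ha (hrA z hz)))
  -- pointwise bound on S
  have hfg : ∀ z ∈ S, ‖y - z‖⁻¹ * ‖z - x‖ ^ (-(2 * α)) ≤ g z := by
    intro z hz
    set r : ℝ := ‖z - yt‖ with hr_def
    have hra : a ≤ r := hrS z hz
    have hr0 : 0 < r := lt_of_lt_of_le ha hra
    have h1 : r / 2 ≤ ‖y - z‖ := by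
      have h1a : ‖z - yt‖ ≤ ‖z - y‖ + ‖y - yt‖ := by
        have : z - yt = (z - y) + (y - yt) := by ring
        rw [this]; exact norm_add_le _ _
      have h1b : ‖z - y‖ = ‖y - z‖ := norm_sub_rev z y
      have hda : d = a / 6 := by rw [ha_def]; ring
      rw [h1b] at h1a
      have : d / 2 ≤ r / 12 := by rw [hda]; linarith
      linarith
    have h2 : r / 6 ≤ ‖z - x‖ := by
      have h2a : ‖z - yt‖ ≤ ‖z - x‖ + ‖x - yt‖ := by
        have : z - yt = (z - x) + (x - yt) := by ring
        rw [this]; exact norm_add_le _ _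
      have : 5 * d = 5 / 6 * a := by rw [ha_def]; ring
      nlinarith
    have e1 : ‖y - z‖⁻¹ ≤ (r / 2)⁻¹ := inv_anti₀ (by positivity) h1
    have e2 : ‖z - x‖ ^ (-(2 * α)) ≤ (r / 6) ^ (-(2 * α)) :=
      Real.rpow_le_rpow_of_nonpos (by positivity) h2 (by linarith)
    have e3 : ‖y - z‖⁻¹ * ‖z - x‖ ^ (-(2 * α)) ≤ (r / 2)⁻¹ * (r / 6) ^ (-(2 * α)) := by
      apply mul_le_mul e1 e2 (Real.rpow_nonneg (norm_nonneg _) _) (by positivity)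
    refine e3.trans ?_
    have e4 : (r / 6 : ℝ) ^ (-(2 * α)) = 6 ^ (2 * α) * r ^ (-(2 * α)) := by
      rw [Real.rpow_neg (by positivity), Real.div_rpow hr0.le (by norm_num),
        Real.rpow_neg hr0.le]
      field_simp
    have e5 : (6 : ℝ) ^ (2 * α) ≤ 36 := by
      have : (6 : ℝ) ^ (2 * α) ≤ 6 ^ (2 : ℝ) :=
        Real.rpow_le_rpow_of_exponent_le (by norm_num) (by linarith)
      have h62 : (6 : ℝ) ^ (2 : ℝ) = 36 := by
        rw [show (2 : ℝ) = ((2 : ℕ) : ℝ) by norm_num, Real.rpow_natCast]; norm_num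
      linarith
    have e6 : r ^ p = r⁻¹ * r ^ (-(2 * α)) := by
      rw [hp_def, show (-1 - 2 * α : ℝ) = (-1) + (-(2 * α)) by ring, Real.rpow_add hr0,
        Real.rpow_neg_one]
    have hrpos : (0:ℝ) ≤ r ^ (-(2 * α)) := Real.rpow_nonneg hr0.le _
    have : (r / 2)⁻¹ * (r / 6) ^ (-(2 * α)) = 2 * 6 ^ (2 * α) * (r⁻¹ * r ^ (-(2 * α))) := by
      rw [e4, inv_div]; ring
    show (r / 2)⁻¹ * (r / 6) ^ (-(2 * α)) ≤ 72 * r ^ p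
    rw [this, e6]
    have h2648 : (2 : ℝ) * 6 ^ (2 * α) ≤ 72 := by linarith
    apply mul_le_mul_of_nonneg_right h2648 (by positivity)
  -- step 1 : bound the integral by the integral of g over A
  have step1 : (∫ z in S, ‖y - z‖⁻¹ * ‖z - x‖ ^ (-(2 * α))) ≤ ∫ z in A, g z := by
    have h1 : (∫ z in S, ‖y - z‖⁻¹ * ‖z - x‖ ^ (-(2 * α))) ≤ ∫ z in S, g z := by
      apply integral_mono_of_nonneg
      · exact Filter.Eventually.of_forall fun z => by positivity
      · exact hgA.mono_set hSA
      · exact (ae_restrict_iff' hSmeas).2 (Filter.Eventually.of_forall hfg)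
    refine h1.trans ?_
    apply setIntegral_mono_set hgA
    · exact Filter.Eventually.of_forall fun z => by positivity
    · exact HasSubset.Subset.eventuallyLE hSA
  -- step 2 : compute the integral of g over A via polar coordinates
  have step2 : (∫ z in A, g z) = 144 * Real.pi * ∫ r in a..3, r * r ^ p := by
    have h1 : (∫ z in A, g z) = 72 * ∫ z in A, ‖z - yt‖ ^ p := by
      rw [hg_def, integral_const_mul]
    rw [h1, hA_def, translate_integral p a 3 yt, radial_integral p a 3 ha ha3]
    ring
  -- step 3 : bound the radial integral
  have step3 : (∫ r in a..3, r * r ^ p) ≤ a ^ (1 - 2 * α) * Real.log (3 / a) := by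
    have hint1 : IntervalIntegrable (fun r : ℝ => r * r ^ p) volume a 3 := by
      apply ContinuousOn.intervalIntegrable
      apply ContinuousOn.mul continuousOn_id
      apply ContinuousOn.rpow_const continuousOn_id
      intro r hr
      rw [Set.uIcc_of_le ha3] at hr
      exact Or.inl (ne_of_gt (lt_of_lt_of_le ha hr.1))
    have hint2 : IntervalIntegrable (fun r : ℝ => a ^ (1 - 2 * α) * r⁻¹) volume a 3 := by
      apply ContinuousOn.intervalIntegrable
      apply ContinuousOn.mul continuousOn_const
      apply ContinuousOn.inv₀ continuousOn_id
      intro r hr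
      rw [Set.uIcc_of_le ha3] at hr
      exact ne_of_gt (lt_of_lt_of_le ha hr.1)
    have hmono : ∀ r ∈ Set.Icc a 3, r * r ^ p ≤ a ^ (1 - 2 * α) * r⁻¹ := by
      intro r hr
      have hr0 : 0 < r := lt_of_lt_of_le ha hr.1
      have e1 : r * r ^ p = r ^ (1 - 2 * α) * r⁻¹ := by
        have e1a : r ^ p = r ^ (1 - 2 * α) * r⁻¹ * r⁻¹ := by
          rw [hp_def, show (-1 - 2 * α : ℝ) = (1 - 2 * α) + (-1) + (-1) by ring,
            Real.rpow_add hr0, Real.rpow_add hr0, Real.rpow_neg_one]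
        rw [e1a]
        field_simp
      rw [e1]
      apply mul_le_mul_of_nonneg_right _ (by positivity)
      exact Real.rpow_le_rpow_of_nonpos ha hr.1 (by linarith)
    calc (∫ r in a..3, r * r ^ p) ≤ ∫ r in a..3, a ^ (1 - 2 * α) * r⁻¹ :=
          intervalIntegral.integral_mono_on ha3 hint1 hint2 hmono
      _ = a ^ (1 - 2 * α) * Real.log (3 / a) := by
          rw [intervalIntegral.integral_const_mul, integral_inv_of_pos ha (by norm_num)]
  -- combine everything
  have hL0 : 0 ≤ Real.log (3 / a) := Real.log_nonneg ((le_div_iff₀ ha).2 (by linarith))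
  have hLle : Real.log (3 / a) ≤ 1 + |Real.log d| := by
    have e1 : Real.log (3 / a) = Real.log 3 - Real.log a :=
      Real.log_div (by norm_num) (ne_of_gt ha)
    have e2 : Real.log a = Real.log 6 + Real.log d := by
      rw [ha_def, Real.log_mul (by norm_num) (ne_of_gt hd0)]
    have e3 : Real.log 3 ≤ Real.log 6 := Real.log_le_log (by norm_num) (by norm_num)
    have e4 : -Real.log d ≤ |Real.log d| := neg_le_abs _
    rw [e1, e2]
    linarith
  have hxy : ‖x - y‖ ≤ a := by
    have : x - y = (x - yt) - (y - yt) := by ring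
    rw [this]
    calc ‖(x - yt) - (y - yt)‖ ≤ ‖x - yt‖ + ‖y - yt‖ := norm_sub_le _ _
      _ ≤ a := by rw [ha_def]; linarith
  have hxyr : ‖x - y‖ ^ (2 * α - 1) ≤ a ^ (2 * α - 1) :=
    Real.rpow_le_rpow (norm_nonneg _) hxy (by linarith)
  have hprod : a ^ (2 * α - 1) * a ^ (1 - 2 * α) = 1 := by
    rw [← Real.rpow_add ha, show (2 * α - 1) + (1 - 2 * α) = 0 by ring, Real.rpow_zero]
  have hI : (∫ z in S, ‖y - z‖⁻¹ * ‖z - x‖ ^ (-(2 * α))) ≤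
      144 * Real.pi * (a ^ (1 - 2 * α) * Real.log (3 / a)) := by
    refine step1.trans ?_
    rw [step2]
    have hpi : (0:ℝ) ≤ 144 * Real.pi := by positivity
    exact mul_le_mul_of_nonneg_left step3 hpi
  have hx0 : (0:ℝ) ≤ ‖x - y‖ ^ (2 * α - 1) := Real.rpow_nonneg (norm_nonneg _) _
  calc ‖x - y‖ ^ (2 * α - 1) * (∫ z in S, ‖y - z‖⁻¹ * ‖z - x‖ ^ (-(2 * α)))
      ≤ ‖x - y‖ ^ (2 * α - 1) * (144 * Real.pi * (a ^ (1 - 2 * α) * Real.log (3 / a))) :=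
        mul_le_mul_of_nonneg_left hI hx0
    _ ≤ a ^ (2 * α - 1) * (144 * Real.pi * (a ^ (1 - 2 * α) * Real.log (3 / a))) := by
        apply mul_le_mul_of_nonneg_right hxyr
        positivity
    _ = 144 * Real.pi * Real.log (3 / a) * (a ^ (2 * α - 1) * a ^ (1 - 2 * α)) := by ring
    _ = 144 * Real.pi * Real.log (3 / a) := by rw [hprod, mul_one]
    _ ≤ 600 * (1 + |Real.log d|) := by
        nlinarith [Real.pi_le_four, Real.pi_pos, abs_nonneg (Real.log d)]
end

section
/- For every α ∈ [1/2, 1) there exists a constant C > 0 such that for all d ∈ (0, 1/2], all x in the closed unit disk, and all y, ỹ ∈ ℝ² with ỹ in the closed unit disk, |y − ỹ| ≤ d/2 and |x − ỹ| ≥ 5d, one has |x − y|^{2α−1} ∫_{D \ (B(x,2d) ∪ B(ỹ,2d))} |y − z|^{−1} |z − x|^{−2α} dz ≤ C (1 + |log d|), where D is the open unit disk and the integral is with respect to two-dimensional Lebesgue measure. -/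
open MeasureTheory Real Set Metric

lemma ann_set_eq (w : ℂ) (s t : ℝ) :
    {z : ℂ | ‖z - w‖ ∈ Set.Icc s t} = Metric.closedBall w t \ Metric.ball w s := by
  ext z
  simp [Set.mem_Icc, Metric.mem_closedBall, Metric.mem_ball, dist_eq_norm, and_comm, not_lt]

lemma ann_meas (w : ℂ) (s t : ℝ) : MeasurableSet {z : ℂ | ‖z - w‖ ∈ Set.Icc s t} := by
  rw [ann_set_eq]
  exact measurableSet_closedBall.diff measurableSet_ball

lemma ann_integral (w : ℂ) {s t : ℝ} (hs : 0 < s) (hst : s ≤ t) :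
    ∫ z in {z : ℂ | ‖z - w‖ ∈ Set.Icc s t}, ‖z - w‖ ^ (-2 : ℝ) = 2 * π * Real.log (t / s) := by
  set F : ℝ → ℝ := (Set.Icc s t).indicator (fun r => r ^ (-2 : ℝ)) with hF
  have h1 : ∫ z in {z : ℂ | ‖z - w‖ ∈ Set.Icc s t}, ‖z - w‖ ^ (-2 : ℝ)
      = ∫ z : ℂ, F ‖z - w‖ := by
    rw [← integral_indicator (ann_meas w s t)]
    congr 1
  have h2 : ∫ z : ℂ, F ‖z - w‖ = ∫ z : ℂ, F ‖z‖ :=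
    integral_sub_right_eq_self (fun z : ℂ => F ‖z‖) w
  have h3 := integral_fun_norm_addHaar (volume : Measure ℂ) F
  rw [Complex.finrank_real_complex] at h3
  have hvol : ((volume : Measure ℂ) (Metric.ball 0 1)).toReal = π := by
    simp [Complex.volume_ball]
  rw [measureReal_def, hvol] at h3
  have h4 : ∫ y in Set.Ioi (0:ℝ), y ^ (2 - 1) • F y = Real.log (t / s) := by
    have : ∀ y : ℝ, y ^ (2 - 1) • F y = (Set.Icc s t).indicator (fun r => r * r ^ (-2:ℝ)) y := by
      intro y
      by_cases hy : y ∈ Set.Icc s t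
      · simp [hF, Set.indicator_of_mem hy]
      · simp [hF, Set.indicator_of_notMem hy]
    simp_rw [this]
    have hIoi : Set.Ioi (0:ℝ) ∩ Set.Icc s t = Set.Icc s t :=
      Set.inter_eq_right.mpr (fun y hy => lt_of_lt_of_le hs hy.1)
    rw [setIntegral_indicator measurableSet_Icc, hIoi]
    have : ∫ y in Set.Icc s t, y * y ^ (-2:ℝ) = ∫ y in Set.Icc s t, y⁻¹ := by
      refine setIntegral_congr_fun measurableSet_Icc (fun y hy => ?_)
      have hy0 : 0 < y := lt_of_lt_of_le hs hy.1
      rw [Real.rpow_neg hy0.le, show (2:ℝ) = ((2:ℕ):ℝ) by norm_num, Real.rpow_natCast]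
      field_simp
    rw [this, MeasureTheory.integral_Icc_eq_integral_Ioc,
      ← intervalIntegral.integral_of_le hst, integral_inv_of_pos hs (hs.trans_le hst)]
  rw [h1, h2, h3, h4]
  simp only [nsmul_eq_mul, smul_eq_mul]
  ring

lemma piece_bound {f : ℂ → ℝ}
    (w : ℂ) {s t c : ℝ} (hs : 0 < s) (hst : s ≤ t) (hc : 0 ≤ c)
    {P : Set ℂ} (hPm : MeasurableSet P) (hf : AEStronglyMeasurable f (volume.restrict P))
    (hsub : ∀ z ∈ P, ‖z - w‖ ∈ Set.Icc s t)
    (h0 : ∀ z ∈ P, 0 ≤ f z)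
    (hle : ∀ z ∈ P, f z ≤ c * ‖z - w‖ ^ (-2 : ℝ)) :
    IntegrableOn f P volume ∧ ∫ z in P, f z ≤ c * (2 * π * Real.log (t / s)) := by
  set A := {z : ℂ | ‖z - w‖ ∈ Set.Icc s t} with hAdef
  have hA : MeasurableSet A := ann_meas w s t
  have hAc : IsCompact A := by
    rw [show A = Metric.closedBall w t \ Metric.ball w s from ann_set_eq w s t]
    exact (isCompact_closedBall w t).diff isOpen_ball
  have hgc : ContinuousOn (fun z : ℂ => c * ‖z - w‖ ^ (-2 : ℝ)) A := by
    refine continuousOn_const.mul (ContinuousOn.rpow_const ?_ ?_)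
    · exact ((continuous_id.sub continuous_const).norm).continuousOn
    · intro z hz
      exact Or.inl (hs.trans_le hz.1).ne'
  have hgint : IntegrableOn (fun z : ℂ => c * ‖z - w‖ ^ (-2 : ℝ)) A :=
    hgc.integrableOn_compact hAc
  have hPA : P ⊆ A := hsub
  have hgP : IntegrableOn (fun z : ℂ => c * ‖z - w‖ ^ (-2 : ℝ)) P := hgint.mono_set hPA
  have hfP : IntegrableOn f P := by
    refine Integrable.mono' hgP hf ?_
    refine (ae_restrict_iff' hPm).2 (Filter.Eventually.of_forall fun z hz => ?_)
    rw [Real.norm_eq_abs, abs_of_nonneg (h0 z hz)]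
    exact hle z hz
  refine ⟨hfP, ?_⟩
  calc ∫ z in P, f z ≤ ∫ z in P, c * ‖z - w‖ ^ (-2 : ℝ) :=
        setIntegral_mono_on hfP hgP hPm hle
    _ ≤ ∫ z in A, c * ‖z - w‖ ^ (-2 : ℝ) := by
        refine setIntegral_mono_set hgint (Filter.Eventually.of_forall fun z => ?_)
          hPA.eventuallyLE
        positivity
    _ = c * ∫ z in A, ‖z - w‖ ^ (-2 : ℝ) := by rw [MeasureTheory.integral_const_mul]
    _ = c * (2 * π * Real.log (t / s)) := by rw [ann_integral w hs hst]


set_option maxHeartbeats 1000000 in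
open Real in
/-- For every `α ∈ [1/2, 1)` there is `C > 0` such that for all `d ∈ (0, 1/2]`, all `x`
in the closed unit disk, and all `y, ỹ` with `ỹ` in the closed unit disk,
`|y − ỹ| ≤ d/2` and `|x − ỹ| ≥ 5d`,
`|x − y|^{2α−1} ∫_{D \ (B(x,2d) ∪ B(ỹ,2d))} |y − z|⁻¹ |z − x|^{−2α} dz ≤ C (1 + |log d|)`. -/
theorem outer_region_integral_bound (α : ℝ) (hα : α ∈ Set.Ico (1 / 2 : ℝ) 1) :
    ∃ C : ℝ, 0 < C ∧ ∀ d : ℝ, d ∈ Set.Ioc (0 : ℝ) (1 / 2) →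
      ∀ x ∈ Metric.closedBall (0 : ℂ) 1, ∀ y : ℂ, ∀ yt ∈ Metric.closedBall (0 : ℂ) 1,
      ‖y - yt‖ ≤ d / 2 → 5 * d ≤ ‖x - yt‖ →
      ‖x - y‖ ^ (2 * α - 1) *
          ∫ z in Metric.ball (0 : ℂ) 1 \ (Metric.ball x (2 * d) ∪ Metric.ball yt (2 * d)),
            ‖y - z‖⁻¹ * ‖z - x‖ ^ (-(2 * α)) ≤
        C * (1 + |Real.log d|) := by
  obtain ⟨hα1, hα2⟩ := hα
  refine ⟨126, by norm_num, ?_⟩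
  rintro d ⟨hd0, hd2⟩ x hx y yt hyt hyyt hxyt
  set r := ‖x - y‖ with hrdef
  have hxn : ‖x‖ ≤ 1 := by simpa [dist_eq_norm] using hx
  have hytn : ‖yt‖ ≤ 1 := by simpa [dist_eq_norm] using hyt
  have hyn : ‖y‖ ≤ 5 / 4 := by
    have h1 : ‖y‖ ≤ ‖y - yt‖ + ‖yt‖ := by
      calc ‖y‖ = ‖(y - yt) + yt‖ := by ring_nf
        _ ≤ ‖y - yt‖ + ‖yt‖ := norm_add_le _ _
    linarith
  have hrge : 9 * d / 2 ≤ r := by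
    have h1 : ‖x - yt‖ ≤ ‖x - y‖ + ‖y - yt‖ := by
      calc ‖x - yt‖ = ‖(x - y) + (y - yt)‖ := by ring_nf
        _ ≤ ‖x - y‖ + ‖y - yt‖ := norm_add_le _ _
    linarith
  have hr0 : 0 < r := lt_of_lt_of_le (by linarith) hrge
  have hrle : r ≤ 9 / 4 := by
    have := norm_sub_le x y
    linarith
  set E := Metric.ball (0:ℂ) 1 \ (Metric.ball x (2*d) ∪ Metric.ball yt (2*d)) with hEdef
  have hEm : MeasurableSet E :=
    measurableSet_ball.diff (measurableSet_ball.union measurableSet_ball)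
  set f := fun z : ℂ => ‖y - z‖⁻¹ * ‖z - x‖ ^ (-(2*α)) with hfdef
  -- facts about points of E
  have hEx : ∀ z ∈ E, 2*d ≤ ‖z - x‖ := by
    intro z hz
    have h1 : ¬ dist z x < 2*d := fun h => hz.2 (Or.inl h)
    rw [dist_eq_norm] at h1
    linarith [not_lt.mp h1]
  have hEy : ∀ z ∈ E, 3*d/2 ≤ ‖y - z‖ := by
    intro z hz
    have h1 : ¬ dist z yt < 2*d := fun h => hz.2 (Or.inr h)
    rw [dist_eq_norm] at h1
    have h1' : 2*d ≤ ‖z - yt‖ := not_lt.mp h1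
    have h2 : ‖z - yt‖ ≤ ‖z - y‖ + ‖y - yt‖ := by
      calc ‖z - yt‖ = ‖(z - y) + (y - yt)‖ := by ring_nf
        _ ≤ ‖z - y‖ + ‖y - yt‖ := norm_add_le _ _
    have h3 : ‖z - y‖ = ‖y - z‖ := norm_sub_rev _ _
    linarith
  have hEz : ∀ z ∈ E, ‖z‖ < 1 := by
    intro z hz
    have := hz.1
    simpa [dist_eq_norm] using this
  have hExu : ∀ z ∈ E, ‖z - x‖ ≤ 2 := by
    intro z hz
    have := norm_sub_le z x
    have := (hEz z hz).le
    linarith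
  -- continuity of f on subsets of E
  have hfc : ∀ P : Set ℂ, P ⊆ E → ContinuousOn f P := by
    intro P hPE
    refine ContinuousOn.mul ?_ ?_
    · refine ContinuousOn.inv₀ ((continuous_const.sub continuous_id).norm.continuousOn) ?_
      intro z hz
      exact (lt_of_lt_of_le (by linarith : (0:ℝ) < 3*d/2) (hEy z (hPE hz))).ne'
    · refine ContinuousOn.rpow_const ((continuous_id.sub continuous_const).norm.continuousOn) ?_
      intro z hz
      exact Or.inl (lt_of_lt_of_le (by linarith : (0:ℝ) < 2*d) (hEx z (hPE hz))).ne'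
  have hf0 : ∀ z, 0 ≤ f z := by
    intro z
    have : (0:ℝ) ≤ ‖y - z‖⁻¹ := by positivity
    have : (0:ℝ) ≤ ‖z - x‖ ^ (-(2*α)) := Real.rpow_nonneg (norm_nonneg _) _
    positivity
  -- the three pieces
  set P1 := E ∩ Metric.ball x (r/2) with hP1def
  set P2 := (E \ Metric.ball x (r/2)) ∩ Metric.ball y (r/2) with hP2def
  set P3 := E \ (Metric.ball x (r/2) ∪ Metric.ball y (r/2)) with hP3def
  have hP1m : MeasurableSet P1 := hEm.inter measurableSet_ball
  have hP2m : MeasurableSet P2 := (hEm.diff measurableSet_ball).inter measurableSet_ball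
  have hP3m : MeasurableSet P3 := hEm.diff (measurableSet_ball.union measurableSet_ball)
  have hP1E : P1 ⊆ E := Set.inter_subset_left
  have hP2E : P2 ⊆ E := fun z hz => hz.1.1
  have hP3E : P3 ⊆ E := Set.diff_subset
  have hEsplit : E = P1 ∪ (P2 ∪ P3) := by
    rw [hP1def, hP2def, hP3def]
    ext z
    simp only [Set.mem_union, Set.mem_inter_iff, Set.mem_diff]
    tauto
  have hd12 : Disjoint P1 (P2 ∪ P3) := by
    refine Set.disjoint_left.mpr ?_
    rintro z hz1 (hz2 | hz3)
    · exact hz2.1.2 hz1.2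
    · exact hz3.2 (Or.inl hz1.2)
  have hd23 : Disjoint P2 P3 := Set.disjoint_left.mpr fun z hz2 hz3 => hz3.2 (Or.inr hz2.2)
  have hrhalf : (0:ℝ) < r/2 := by linarith
  have hS0 : (0:ℝ) ≤ (r/2) ^ (1 - 2*α) := Real.rpow_nonneg hrhalf.le _
  -- piece 1
  obtain ⟨hi1, hb1⟩ := piece_bound (f := f) x (s := 2*d) (t := r/2)
      (c := (r/2) ^ (1 - 2*α)) (by linarith) (by linarith) hS0 hP1m
      ((hfc P1 hP1E).aestronglyMeasurable hP1m)
      (fun z hz => ⟨hEx z hz.1, by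
        have : dist z x < r/2 := hz.2
        rw [dist_eq_norm] at this
        linarith⟩)
      (fun z _ => hf0 z)
      (by
        intro z hz
        have hzx2d : 2*d ≤ ‖z - x‖ := hEx z hz.1
        have hzxr : ‖z - x‖ ≤ r/2 := by
          have : dist z x < r/2 := hz.2
          rw [dist_eq_norm] at this
          linarith
        have hx0 : 0 < ‖z - x‖ := lt_of_lt_of_le (by linarith) hzx2d
        have hyz : r/2 ≤ ‖y - z‖ := by
          have h1 : r ≤ ‖x - z‖ + ‖z - y‖ := by
            calc r = ‖(x - z) + (z - y)‖ := by rw [hrdef]; ring_nf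
              _ ≤ ‖x - z‖ + ‖z - y‖ := norm_add_le _ _
          have h2 : ‖x - z‖ = ‖z - x‖ := norm_sub_rev _ _
          have h3 : ‖z - y‖ = ‖y - z‖ := norm_sub_rev _ _
          linarith
        have e1 : ‖y - z‖⁻¹ ≤ (r/2)⁻¹ := inv_anti₀ hrhalf hyz
        have e2 : ‖z - x‖ ^ (-(2*α)) ≤ (r/2) ^ (2 - 2*α) * ‖z - x‖ ^ (-2:ℝ) := by
          have heq : ‖z - x‖ ^ (-(2*α)) = ‖z - x‖ ^ (2 - 2*α) * ‖z - x‖ ^ (-2:ℝ) := by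
            rw [← Real.rpow_add hx0]
            ring_nf
          rw [heq]
          exact mul_le_mul_of_nonneg_right
            (Real.rpow_le_rpow hx0.le hzxr (by linarith))
            (Real.rpow_nonneg hx0.le _)
        calc f z = ‖y - z‖⁻¹ * ‖z - x‖ ^ (-(2*α)) := rfl
          _ ≤ (r/2)⁻¹ * ((r/2) ^ (2 - 2*α) * ‖z - x‖ ^ (-2:ℝ)) := by
              refine mul_le_mul e1 e2 (Real.rpow_nonneg (norm_nonneg _) _) (by positivity)
          _ = (r/2) ^ (1 - 2*α) * ‖z - x‖ ^ (-2:ℝ) := by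
              rw [← Real.rpow_neg_one (r/2), ← mul_assoc, ← Real.rpow_add hrhalf,
                show (-1 + (2 - 2*α) : ℝ) = 1 - 2*α by ring])
  -- piece 2
  obtain ⟨hi2, hb2⟩ := piece_bound (f := f) y (s := 3*d/2) (t := r/2)
      (c := (r/2) ^ (1 - 2*α)) (by linarith) (by linarith) hS0 hP2m
      ((hfc P2 hP2E).aestronglyMeasurable hP2m)
      (fun z hz => ⟨by
        have := hEy z hz.1.1
        have h3 : ‖y - z‖ = ‖z - y‖ := norm_sub_rev _ _
        linarith, by
        have : dist z y < r/2 := hz.2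
        rw [dist_eq_norm] at this
        linarith⟩)
      (fun z _ => hf0 z)
      (by
        intro z hz
        have hzyl : 3*d/2 ≤ ‖y - z‖ := hEy z hz.1.1
        have hrev : ‖y - z‖ = ‖z - y‖ := norm_sub_rev _ _
        have hzy0 : 0 < ‖z - y‖ := by rw [← hrev]; linarith
        have hzyr : ‖z - y‖ ≤ r/2 := by
          have : dist z y < r/2 := hz.2
          rw [dist_eq_norm] at this
          linarith
        have hzxr : r/2 ≤ ‖z - x‖ := by
          have h1 : ¬ dist z x < r/2 := hz.1.2
          rw [dist_eq_norm] at h1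
          linarith [not_lt.mp h1]
        have e1 : ‖z - x‖ ^ (-(2*α)) ≤ (r/2) ^ (-(2*α)) :=
          Real.rpow_le_rpow_of_nonpos hrhalf hzxr (by linarith)
        have e2 : ‖y - z‖⁻¹ ≤ (r/2) * ‖z - y‖ ^ (-2:ℝ) := by
          have heq : ‖z - y‖⁻¹ = ‖z - y‖ * ‖z - y‖ ^ (-2:ℝ) := by
            rw [Real.rpow_neg (norm_nonneg _), show ((2:ℝ)) = ((2:ℕ):ℝ) by norm_num,
              Real.rpow_natCast, pow_two, mul_inv, ← mul_assoc,
              mul_inv_cancel₀ hzy0.ne', one_mul]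
          rw [hrev, heq]
          exact mul_le_mul_of_nonneg_right hzyr (Real.rpow_nonneg (norm_nonneg _) _)
        calc f z = ‖y - z‖⁻¹ * ‖z - x‖ ^ (-(2*α)) := rfl
          _ ≤ ((r/2) * ‖z - y‖ ^ (-2:ℝ)) * ((r/2) ^ (-(2*α))) := by
              refine mul_le_mul e2 e1 (Real.rpow_nonneg (norm_nonneg _) _) (by positivity)
          _ = (r/2) ^ (1 - 2*α) * ‖z - y‖ ^ (-2:ℝ) := by
              rw [show (1 - 2*α : ℝ) = 1 + (-(2*α)) by ring, Real.rpow_add hrhalf,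
                Real.rpow_one]
              ring)
  -- piece 3
  obtain ⟨hi3, hb3⟩ := piece_bound (f := f) x (s := r/2) (t := 2)
      (c := 3 * (r/2) ^ (1 - 2*α)) hrhalf (by linarith) (by positivity) hP3m
      ((hfc P3 hP3E).aestronglyMeasurable hP3m)
      (fun z hz => ⟨by
        have h1 : ¬ dist z x < r/2 := fun h => hz.2 (Or.inl h)
        rw [dist_eq_norm] at h1
        linarith [not_lt.mp h1], hExu z hz.1⟩)
      (fun z _ => hf0 z)
      (by
        intro z hz
        have hzxr : r/2 ≤ ‖z - x‖ := by
          have h1 : ¬ dist z x < r/2 := fun h => hz.2 (Or.inl h)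
          rw [dist_eq_norm] at h1
          linarith [not_lt.mp h1]
        have hzyr : r/2 ≤ ‖z - y‖ := by
          have h1 : ¬ dist z y < r/2 := fun h => hz.2 (Or.inr h)
          rw [dist_eq_norm] at h1
          linarith [not_lt.mp h1]
        have hzx0 : 0 < ‖z - x‖ := lt_of_lt_of_le hrhalf hzxr
        have hrev : ‖y - z‖ = ‖z - y‖ := norm_sub_rev _ _
        have hzy0 : 0 < ‖y - z‖ := by rw [hrev]; linarith
        have h31 : ‖z - x‖ ≤ 3 * ‖y - z‖ := by
          have h1 : ‖z - x‖ ≤ ‖z - y‖ + ‖y - x‖ := by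
            calc ‖z - x‖ = ‖(z - y) + (y - x)‖ := by ring_nf
              _ ≤ ‖z - y‖ + ‖y - x‖ := norm_add_le _ _
          have h2 : ‖y - x‖ = r := by rw [hrdef]; exact norm_sub_rev _ _
          linarith
        have e1 : ‖y - z‖⁻¹ ≤ 3 * ‖z - x‖⁻¹ := by
          have h1 : ‖z - x‖/3 ≤ ‖y - z‖ := by linarith
          have h2 := inv_anti₀ (by linarith : (0:ℝ) < ‖z - x‖/3) h1
          calc ‖y - z‖⁻¹ ≤ (‖z - x‖/3)⁻¹ := h2
            _ = 3 * ‖z - x‖⁻¹ := by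
                rw [inv_div]
                ring
        have e2 : ‖z - x‖⁻¹ * ‖z - x‖ ^ (-(2*α))
            ≤ (r/2) ^ (1 - 2*α) * ‖z - x‖ ^ (-2:ℝ) := by
          have heq : ‖z - x‖⁻¹ * ‖z - x‖ ^ (-(2*α))
              = ‖z - x‖ ^ (1 - 2*α) * ‖z - x‖ ^ (-2:ℝ) := by
            rw [← Real.rpow_neg_one ‖z - x‖, ← Real.rpow_add hzx0, ← Real.rpow_add hzx0]
            ring_nf
          rw [heq]
          exact mul_le_mul_of_nonneg_right
            (Real.rpow_le_rpow_of_nonpos hrhalf hzxr (by linarith))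
            (Real.rpow_nonneg (norm_nonneg _) _)
        calc f z = ‖y - z‖⁻¹ * ‖z - x‖ ^ (-(2*α)) := rfl
          _ ≤ (3 * ‖z - x‖⁻¹) * ‖z - x‖ ^ (-(2*α)) := by
              refine mul_le_mul_of_nonneg_right e1 (Real.rpow_nonneg (norm_nonneg _) _)
          _ = 3 * (‖z - x‖⁻¹ * ‖z - x‖ ^ (-(2*α))) := by ring
          _ ≤ 3 * ((r/2) ^ (1 - 2*α) * ‖z - x‖ ^ (-2:ℝ)) := by linarith [e2]
          _ = 3 * (r/2) ^ (1 - 2*α) * ‖z - x‖ ^ (-2:ℝ) := by ring)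
  -- splitting the integral
  have hsum : ∫ z in E, f z = (∫ z in P1, f z) + ((∫ z in P2, f z) + (∫ z in P3, f z)) := by
    rw [hEsplit, setIntegral_union hd12 (hP2m.union hP3m) hi1 (hi2.union hi3),
      setIntegral_union hd23 hP3m hi2 hi3]
  -- log bounds
  have hlogd : Real.log (1/d) = |Real.log d| := by
    rw [one_div, Real.log_inv, abs_of_nonpos (Real.log_nonpos hd0.le (by linarith))]
  have hM0 : (0:ℝ) ≤ 1 + |Real.log d| := by positivity
  have hL1 : Real.log ((r/2)/(2*d)) ≤ 1 + |Real.log d| := by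
    have h1 : (r/2)/(2*d) ≤ 1/d := by
      rw [div_le_div_iff₀ (by linarith) (by linarith)]
      nlinarith
    have := (Real.log_le_log_iff (div_pos hrhalf (by linarith)) (by positivity)).mpr h1
    rw [hlogd] at this
    linarith
  have hL2 : Real.log ((r/2)/(3*d/2)) ≤ 1 + |Real.log d| := by
    have h1 : (r/2)/(3*d/2) ≤ 1/d := by
      rw [div_le_div_iff₀ (by linarith) (by linarith)]
      nlinarith
    have := (Real.log_le_log_iff (div_pos hrhalf (by linarith)) (by positivity)).mpr h1
    rw [hlogd] at this
    linarith
  have hL3 : Real.log (2/(r/2)) ≤ 1 + |Real.log d| := by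
    have h1 : 2/(r/2) ≤ 1/d := by
      rw [div_le_div_iff₀ (by linarith) (by linarith)]
      nlinarith
    have := (Real.log_le_log_iff (div_pos (by norm_num) hrhalf) (by positivity)).mpr h1
    rw [hlogd] at this
    linarith
  -- assembling
  have hpi : (0:ℝ) ≤ 2 * π := by positivity
  have hsumle : ∫ z in E, f z
      ≤ 5 * (r/2) ^ (1 - 2*α) * (2 * π * (1 + |Real.log d|)) := by
    have t1 : (r/2) ^ (1 - 2*α) * (2 * π * Real.log ((r/2)/(2*d)))
        ≤ (r/2) ^ (1 - 2*α) * (2 * π * (1 + |Real.log d|)) :=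
      mul_le_mul_of_nonneg_left (mul_le_mul_of_nonneg_left hL1 hpi) hS0
    have t2 : (r/2) ^ (1 - 2*α) * (2 * π * Real.log ((r/2)/(3*d/2)))
        ≤ (r/2) ^ (1 - 2*α) * (2 * π * (1 + |Real.log d|)) :=
      mul_le_mul_of_nonneg_left (mul_le_mul_of_nonneg_left hL2 hpi) hS0
    have t3 : 3 * (r/2) ^ (1 - 2*α) * (2 * π * Real.log (2/(r/2)))
        ≤ 3 * (r/2) ^ (1 - 2*α) * (2 * π * (1 + |Real.log d|)) :=
      mul_le_mul_of_nonneg_left (mul_le_mul_of_nonneg_left hL3 hpi) (by positivity)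
    rw [hsum]
    calc (∫ z in P1, f z) + ((∫ z in P2, f z) + (∫ z in P3, f z))
        ≤ ((r/2) ^ (1 - 2*α) * (2 * π * (1 + |Real.log d|)))
          + (((r/2) ^ (1 - 2*α) * (2 * π * (1 + |Real.log d|)))
            + (3 * (r/2) ^ (1 - 2*α) * (2 * π * (1 + |Real.log d|)))) := by
          exact add_le_add (hb1.trans t1) (add_le_add (hb2.trans t2) (hb3.trans t3))
      _ = 5 * (r/2) ^ (1 - 2*α) * (2 * π * (1 + |Real.log d|)) := by ring
  have hkey : r ^ (2*α - 1) * ((r/2) ^ (1 - 2*α)) = 2 ^ (2*α - 1) := by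
    rw [Real.div_rpow hr0.le (by norm_num : (0:ℝ) ≤ 2), ← mul_div_assoc,
      ← Real.rpow_add hr0, show (2*α - 1) + (1 - 2*α) = (0:ℝ) by ring, Real.rpow_zero,
      show (1:ℝ)/2 ^ (1 - 2*α) = (2:ℝ) ^ (-(1 - 2*α)) by
        rw [Real.rpow_neg (by norm_num : (0:ℝ) ≤ 2), one_div],
      show -(1 - 2*α) = 2*α - 1 by ring]
  have h2le : (2:ℝ) ^ (2*α - 1) ≤ 2 := by
    calc (2:ℝ) ^ (2*α - 1) ≤ 2 ^ (1:ℝ) :=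
        Real.rpow_le_rpow_of_exponent_le one_le_two (by linarith)
      _ = 2 := Real.rpow_one 2
  calc r ^ (2*α - 1) * ∫ z in E, f z
      ≤ r ^ (2*α - 1) * (5 * (r/2) ^ (1 - 2*α) * (2 * π * (1 + |Real.log d|))) :=
        mul_le_mul_of_nonneg_left hsumle (Real.rpow_nonneg hr0.le _)
    _ = (r ^ (2*α - 1) * ((r/2) ^ (1 - 2*α))) * (10 * π * (1 + |Real.log d|)) := by ring
    _ = 2 ^ (2*α - 1) * (10 * π * (1 + |Real.log d|)) := by rw [hkey]
    _ ≤ 2 * (10 * π * (1 + |Real.log d|)) :=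
        mul_le_mul_of_nonneg_right h2le (by positivity)
    _ ≤ 126 * (1 + |Real.log d|) := by nlinarith [Real.pi_le_four, hM0]
end

section
/- For every α ∈ [1/2, 1) there exists a constant C > 0 such that the following holds: for all d ∈ (0, 1/2], all x in the closed unit disk, and all y₁, y₂ in the closed unit disk with |y₁ − y₂| = d, setting ỹ = (y₁ + y₂)/2 and assuming |x − ỹ| ≥ 5d, one has |x − y₁|^{2α} ∫_{D \ (B(x,2d) ∪ B(ỹ,2d))} |z − y₁|^{−1} |z − y₂|^{−1} |z − x|^{−2α} dz ≤ C (1 + |log d|), where D is the open unit disk and the integral is with respect to two-dimensional Lebesgue measure. -/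
open MeasureTheory Metric Set Real
set_option maxHeartbeats 1000000

lemma radial0 (g : ℝ → ℝ) (A : Set ℝ) (hA : MeasurableSet A) :
    ∫ z in {z : ℂ | ‖z‖ ∈ A}, g ‖z‖ = 2 * π * ∫ t in A ∩ Set.Ioi 0, t * g t := by
  have hset : MeasurableSet {z : ℂ | ‖z‖ ∈ A} := measurable_norm hA
  have h1 : ∫ z in {z : ℂ | ‖z‖ ∈ A}, g ‖z‖ = ∫ z : ℂ, A.indicator g ‖z‖ := by
    rw [← integral_indicator hset]
    apply integral_congr_ae
    filter_upwards with z
    by_cases h : ‖z‖ ∈ A <;> simp [h, Set.indicator]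
  rw [h1, integral_fun_norm_addHaar volume (A.indicator g)]
  rw [Complex.finrank_real_complex]
  have h2 : ∫ y in Set.Ioi (0:ℝ), y ^ (2 - 1) • A.indicator g y
      = ∫ t in A ∩ Set.Ioi 0, t * g t := by
    have : ∀ y : ℝ, y ^ (2 - 1) • A.indicator g y = A.indicator (fun t => t * g t) y := by
      intro y
      by_cases h : y ∈ A <;> simp [h, Set.indicator]
    simp_rw [this]
    rw [setIntegral_indicator hA, Set.inter_comm]
  rw [h2]
  simp [Complex.volume_ball, Measure.real]
  ring

lemma radialc (c : ℂ) (g : ℝ → ℝ) (A : Set ℝ) (hA : MeasurableSet A) :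
    ∫ z in {z : ℂ | ‖z - c‖ ∈ A}, g ‖z - c‖ = 2 * π * ∫ t in A ∩ Set.Ioi 0, t * g t := by
  have hemb : MeasurableEmbedding (fun z : ℂ => z + c) :=
    (MeasurableEquiv.addRight c).measurableEmbedding
  have hmap : Measure.map (fun z : ℂ => z + c) volume = volume :=
    map_add_right_eq_self volume c
  calc ∫ z in {z : ℂ | ‖z - c‖ ∈ A}, g ‖z - c‖
      = ∫ z in {z : ℂ | ‖z - c‖ ∈ A}, g ‖z - c‖ ∂(Measure.map (fun z : ℂ => z + c) volume) := by
        rw [hmap]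
    _ = ∫ w in (fun z : ℂ => z + c) ⁻¹' {z : ℂ | ‖z - c‖ ∈ A}, g ‖w + c - c‖ :=
        hemb.setIntegral_map _ _
    _ = ∫ w in {w : ℂ | ‖w‖ ∈ A}, g ‖w‖ := by
        congr 1
        · ext w; simp [Set.preimage]
        · ext w; rw [add_sub_cancel_right]
    _ = 2 * π * ∫ t in A ∩ Set.Ioi 0, t * g t := radial0 g A hA

/-- annulus log integral -/
lemma annulus_log (c : ℂ) {a b : ℝ} (ha : 0 < a) (hab : a ≤ b) :
    ∫ z in {z : ℂ | ‖z - c‖ ∈ Set.Icc a b}, (‖z - c‖ ^ 2)⁻¹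
      = 2 * π * (Real.log b - Real.log a) := by
  rw [radialc c (fun t => (t ^ 2)⁻¹) _ measurableSet_Icc]
  have hsub : Set.Icc a b ∩ Set.Ioi 0 = Set.Icc a b := by
    apply Set.inter_eq_left.mpr
    intro t ht
    exact lt_of_lt_of_le ha ht.1
  rw [hsub]
  have hcong : ∫ t in Set.Icc a b, t * (t ^ 2)⁻¹ = ∫ t in Set.Icc a b, t⁻¹ := by
    apply setIntegral_congr_fun measurableSet_Icc
    intro t ht
    have h0 : t ≠ 0 := (lt_of_lt_of_le ha ht.1).ne'
    field_simp
  rw [hcong, MeasureTheory.integral_Icc_eq_integral_Ioc,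
    ← intervalIntegral.integral_of_le hab, integral_inv]
  · rw [Real.log_div (by linarith : b ≠ 0) ha.ne']
  · rw [Set.uIcc_of_le hab]
    intro h
    exact absurd h.1 (not_le.mpr ha)

/-- ball rpow integral bound -/
lemma ball_rpow (c : ℂ) {a R p : ℝ} (ha : 0 < a) (haR : a ≤ R) (hp : -2 < p) :
    ∫ z in {z : ℂ | ‖z - c‖ ∈ Set.Ico a R}, ‖z - c‖ ^ p
      ≤ 2 * π * (R ^ (p + 2) / (p + 2)) := by
  rw [radialc c (fun t => t ^ p) _ measurableSet_Ico]
  have hsub : Set.Ico a R ∩ Set.Ioi 0 = Set.Ico a R := by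
    apply Set.inter_eq_left.mpr
    intro t ht
    exact lt_of_lt_of_le ha ht.1
  rw [hsub]
  have hcong : ∫ t in Set.Ico a R, t * t ^ p = ∫ t in Set.Ico a R, t ^ (p + 1) := by
    apply setIntegral_congr_fun measurableSet_Ico
    intro t ht
    simp only []
    rw [Real.rpow_add_one (lt_of_lt_of_le ha ht.1).ne']
    ring
  rw [hcong, MeasureTheory.integral_Ico_eq_integral_Ioo,
    ← MeasureTheory.integral_Ioc_eq_integral_Ioo, ← intervalIntegral.integral_of_le haR]
  have hInt : ∀ u v : ℝ, IntervalIntegrable (fun t : ℝ => t ^ (p + 1)) volume u v :=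
    fun u v => intervalIntegral.intervalIntegrable_rpow' (by linarith)
  have hsplit : (∫ t in (0:ℝ)..a, t ^ (p+1)) + ∫ t in a..R, t ^ (p+1)
      = ∫ t in (0:ℝ)..R, t ^ (p+1) :=
    intervalIntegral.integral_add_adjacent_intervals (hInt 0 a) (hInt a R)
  have h0a : 0 ≤ ∫ t in (0:ℝ)..a, t ^ (p+1) := by
    apply intervalIntegral.integral_nonneg ha.le
    intro t ht
    exact Real.rpow_nonneg ht.1 _
  have hval : ∫ t in (0:ℝ)..R, t ^ (p+1) = R ^ (p + 2) / (p + 2) := by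
    rw [integral_rpow (Or.inl (by linarith))]
    rw [Real.zero_rpow (by linarith : p + 1 + 1 ≠ 0)]
    norm_num
    ring_nf
  have : ∫ t in a..R, t ^ (p+1) ≤ R ^ (p + 2) / (p + 2) := by
    rw [← hval, ← hsplit]; linarith
  have hpi : (0:ℝ) ≤ 2 * π := by positivity
  calc 2 * π * ∫ t in a..R, t ^ (p+1) ≤ 2 * π * (R ^ (p + 2) / (p + 2)) := by
        exact mul_le_mul_of_nonneg_left this hpi

lemma integrableOn_bdd {f : ℂ → ℝ} {s : Set ℂ} {c : ℂ} {R M : ℝ}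
    (hsub : s ⊆ Metric.closedBall c R) (hmeas : AEStronglyMeasurable f volume)
    (hsm : MeasurableSet s) (hbd : ∀ z ∈ s, |f z| ≤ M) : IntegrableOn f s volume := by
  apply Measure.integrableOn_of_bounded (M := M)
  · exact ne_of_lt (lt_of_le_of_lt (measure_mono hsub) measure_closedBall_lt_top)
  · exact hmeas
  · rw [ae_restrict_iff' hsm]
    filter_upwards with z hz
    rw [Real.norm_eq_abs]
    exact hbd z hz


/-- For every `α ∈ [1/2, 1)` there is `C > 0` such that for all `d ∈ (0, 1/2]`, all `x`
in the closed unit disk, all `y₁, y₂` in the closed unit disk with `|y₁ − y₂| = d`,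
setting `ỹ = (y₁+y₂)/2` and assuming `|x − ỹ| ≥ 5d`,
`|x − y₁|^{2α} ∫_{D \ (B(x,2d) ∪ B(ỹ,2d))} |z − y₁|⁻¹ |z − y₂|⁻¹ |z − x|^{−2α} dz ≤
  C (1 + |log d|)`. -/
theorem outer_region_double_integral_bound (α : ℝ) (hα : α ∈ Set.Ico (1 / 2 : ℝ) 1) :
    ∃ C : ℝ, 0 < C ∧ ∀ d : ℝ, d ∈ Set.Ioc (0 : ℝ) (1 / 2) →
      ∀ x ∈ Metric.closedBall (0 : ℂ) 1,
      ∀ y₁ ∈ Metric.closedBall (0 : ℂ) 1, ∀ y₂ ∈ Metric.closedBall (0 : ℂ) 1,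
      ‖y₁ - y₂‖ = d → 5 * d ≤ ‖x - (y₁ + y₂) / 2‖ →
      ‖x - y₁‖ ^ (2 * α) *
          ∫ z in Metric.ball (0 : ℂ) 1 \
              (Metric.ball x (2 * d) ∪ Metric.ball ((y₁ + y₂) / 2) (2 * d)),
            ‖z - y₁‖⁻¹ * ‖z - y₂‖⁻¹ * ‖z - x‖ ^ (-(2 * α)) ≤
        C * (1 + |Real.log d|) := by
  obtain ⟨hα1, hα2⟩ := hα
  have h2α2 : (0:ℝ) < 2 - 2*α := by linarith
  refine ⟨100 * π / (2 - 2*α), by positivity, ?_⟩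
  rintro d ⟨hd0, hdh⟩ x hx y₁ hy₁ y₂ hy₂ hd12 hfar
  rw [mem_closedBall_iff_norm, sub_zero] at hx hy₁ hy₂
  set yt : ℂ := (y₁ + y₂) / 2 with hty
  set r : ℝ := ‖x - yt‖ with hr
  have hr0 : 0 < r := lt_of_lt_of_le (by positivity) hfar
  set S : Set ℂ := Metric.ball (0 : ℂ) 1 \ (Metric.ball x (2 * d) ∪ Metric.ball yt (2 * d))
    with hS
  set f : ℂ → ℝ := fun z => ‖z - y₁‖⁻¹ * ‖z - y₂‖⁻¹ * ‖z - x‖ ^ (-(2 * α)) with hf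
  -- basic facts
  have hy1t : ‖y₁ - yt‖ = d / 2 := by
    have h : y₁ - yt = (y₁ - y₂) / 2 := by rw [hty]; ring
    rw [h, norm_div, hd12]
    simp
  have hy2t : ‖y₂ - yt‖ = d / 2 := by
    have h : y₂ - yt = -((y₁ - y₂) / 2) := by rw [hty]; ring
    rw [h, norm_neg, norm_div, hd12]
    simp
  have htyn : ‖yt‖ ≤ 1 := by
    rw [hty]
    calc ‖(y₁ + y₂) / 2‖ = ‖y₁ + y₂‖ / 2 := by rw [norm_div]; simp
      _ ≤ (‖y₁‖ + ‖y₂‖) / 2 := by linarith [norm_add_le y₁ y₂]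
      _ ≤ 1 := by linarith
  have hdr : 5 * d ≤ r := hfar
  have hxy1 : ‖x - y₁‖ ≤ 11/10 * r := by
    calc ‖x - y₁‖ = ‖(x - yt) + (yt - y₁)‖ := by ring_nf
      _ ≤ ‖x - yt‖ + ‖yt - y₁‖ := norm_add_le _ _
      _ = r + d / 2 := by rw [← norm_sub_rev y₁ yt, hy1t]
      _ ≤ 11/10 * r := by linarith
  -- facts about points of S
  have hSmem : ∀ z ∈ S, ‖z‖ < 1 ∧ 2*d ≤ ‖z - x‖ ∧ 2*d ≤ ‖z - yt‖ := by
    intro z hz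
    obtain ⟨hz1, hz2⟩ := hz
    rw [Set.mem_union] at hz2
    push_neg at hz2
    obtain ⟨hz2, hz3⟩ := hz2
    rw [Metric.mem_ball, dist_eq_norm] at hz1 hz2 hz3
    rw [sub_zero] at hz1
    exact ⟨hz1, le_of_not_gt hz2, le_of_not_gt hz3⟩
  have hSy1 : ∀ z ∈ S, 3/4 * ‖z - yt‖ ≤ ‖z - y₁‖ := by
    intro z hz
    obtain ⟨-, -, h3⟩ := hSmem z hz
    have htri : ‖z - yt‖ ≤ ‖z - y₁‖ + ‖y₁ - yt‖ := by
      have : z - yt = (z - y₁) + (y₁ - yt) := by ring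
      rw [this]; exact norm_add_le _ _
    rw [hy1t] at htri
    linarith
  have hSy2 : ∀ z ∈ S, 3/4 * ‖z - yt‖ ≤ ‖z - y₂‖ := by
    intro z hz
    obtain ⟨-, -, h3⟩ := hSmem z hz
    have htri : ‖z - yt‖ ≤ ‖z - y₂‖ + ‖y₂ - yt‖ := by
      have : z - yt = (z - y₂) + (y₂ - yt) := by ring
      rw [this]; exact norm_add_le _ _
    rw [hy2t] at htri
    linarith
  have hfnn : ∀ z : ℂ, 0 ≤ f z := by
    intro z
    rw [hf]
    positivity
  have hfm : AEStronglyMeasurable f volume := by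
    apply Measurable.aestronglyMeasurable
    rw [hf]
    fun_prop
  have hSm : MeasurableSet S :=
    measurableSet_ball.diff (measurableSet_ball.union measurableSet_ball)
  have hSsub : S ⊆ Metric.closedBall (0:ℂ) 1 := fun z hz => ball_subset_closedBall hz.1
  have hIntS : IntegrableOn f S volume := by
    apply integrableOn_bdd (M := (3/2*d)⁻¹ * (3/2*d)⁻¹ * (2*d) ^ (-(2*α))) hSsub hfm hSm
    intro z hz
    obtain ⟨-, h2, h3⟩ := hSmem z hz
    have hzy1 : 3/2*d ≤ ‖z - y₁‖ := by have := hSy1 z hz; linarith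
    have hzy2 : 3/2*d ≤ ‖z - y₂‖ := by have := hSy2 z hz; linarith
    have hd32 : (0:ℝ) < 3/2*d := by linarith
    rw [abs_of_nonneg (hfnn z), hf]
    have e1 : ‖z - y₁‖⁻¹ ≤ (3/2*d)⁻¹ := inv_anti₀ hd32 hzy1
    have e2 : ‖z - y₂‖⁻¹ ≤ (3/2*d)⁻¹ := inv_anti₀ hd32 hzy2
    have e3 : ‖z - x‖ ^ (-(2*α)) ≤ (2*d) ^ (-(2*α)) :=
      Real.rpow_le_rpow_of_nonpos (by linarith) h2 (by linarith)
    have h1 : (0:ℝ) ≤ ‖z - y₁‖⁻¹ := by positivity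
    have h2' : (0:ℝ) ≤ ‖z - y₂‖⁻¹ := by positivity
    have h3' : (0:ℝ) ≤ ‖z - x‖ ^ (-(2*α)) := Real.rpow_nonneg (norm_nonneg _) _
    exact mul_le_mul (mul_le_mul e1 e2 h2' (by positivity)) e3 h3' (by positivity)
  set A : Set ℂ := {z : ℂ | r/2 ≤ ‖z - x‖} with hA
  have hAm : MeasurableSet A := by
    have hm : Measurable fun z : ℂ => ‖z - x‖ := by fun_prop
    exact measurableSet_le measurable_const hm
  have hsplit : ∫ z in S, f z = (∫ z in S ∩ A, f z) + ∫ z in S \ A, f z :=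
    (integral_inter_add_diff hAm hIntS).symm
  have hrd4 : 2*d ≤ r/2 := by linarith
  set L := |Real.log d| with hL
  have hLnn : 0 ≤ L := abs_nonneg _
  have hlogd : Real.log 2 - Real.log (2*d) = L := by
    rw [Real.log_mul two_ne_zero hd0.ne', hL,
      abs_of_nonpos (Real.log_nonpos hd0.le (by linarith))]
    ring
  have hB1 : ∫ z in S ∩ A, f z ≤ (16/9 * (r/2) ^ (-(2*α))) * (2*π*L) := by
    set T₁ : Set ℂ := {z : ℂ | ‖z - yt‖ ∈ Set.Icc (2*d) 2} with hT1
    have hT1m : MeasurableSet T₁ := by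
      have hm : Measurable fun z : ℂ => ‖z - yt‖ := by fun_prop
      exact hm measurableSet_Icc
    have hT1sub : T₁ ⊆ Metric.closedBall yt 2 := by
      intro z hz
      rw [Metric.mem_closedBall, dist_eq_norm]
      exact hz.2
    have hsub1 : S ∩ A ⊆ T₁ := by
      intro z hz
      obtain ⟨hzS, hzA⟩ := hz
      obtain ⟨h1, h2, h3⟩ := hSmem z hzS
      constructor
      · exact h3
      · calc ‖z - yt‖ ≤ ‖z‖ + ‖yt‖ := norm_sub_le _ _
          _ ≤ 2 := by linarith
    set G₁ : ℂ → ℝ := fun z => (16/9 * (r/2) ^ (-(2*α))) * (‖z - yt‖^2)⁻¹ with hG1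
    have hc1nn : (0:ℝ) ≤ 16/9 * (r/2) ^ (-(2*α)) := by positivity
    have hG1nn : ∀ z, 0 ≤ G₁ z := fun z => by rw [hG1]; positivity
    have hG1m : AEStronglyMeasurable G₁ volume := by
      apply Measurable.aestronglyMeasurable; rw [hG1]; fun_prop
    have hIntG1 : IntegrableOn G₁ T₁ volume := by
      apply integrableOn_bdd (M := (16/9 * (r/2) ^ (-(2*α))) * ((2*d)^2)⁻¹) hT1sub hG1m hT1m
      intro z hz
      rw [abs_of_nonneg (hG1nn z), hG1]
      apply mul_le_mul_of_nonneg_left _ hc1nn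
      apply inv_anti₀ (by positivity)
      nlinarith [hz.1, hd0]
    have hpt : ∀ z ∈ S ∩ A, f z ≤ G₁ z := by
      intro z hz
      obtain ⟨hzS, hzA⟩ := hz
      obtain ⟨h1, h2, h3⟩ := hSmem z hzS
      have hw0 : 0 < ‖z - yt‖ := by linarith
      have e1 : ‖z - y₁‖⁻¹ ≤ (3/4 * ‖z - yt‖)⁻¹ :=
        inv_anti₀ (by linarith) (hSy1 z hzS)
      have e2 : ‖z - y₂‖⁻¹ ≤ (3/4 * ‖z - yt‖)⁻¹ :=
        inv_anti₀ (by linarith) (hSy2 z hzS)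
      have e3 : ‖z - x‖ ^ (-(2*α)) ≤ (r/2) ^ (-(2*α)) :=
        Real.rpow_le_rpow_of_nonpos (by linarith) hzA (by linarith)
      have heq : (3/4 * ‖z - yt‖)⁻¹ * (3/4 * ‖z - yt‖)⁻¹ * ((r/2) ^ (-(2*α))) = G₁ z := by
        rw [hG1]
        field_simp
        ring
      rw [hf, ← heq]
      exact mul_le_mul (mul_le_mul e1 e2 (by positivity) (by positivity)) e3
        (Real.rpow_nonneg (norm_nonneg _) _) (by positivity)
    calc ∫ z in S ∩ A, f z ≤ ∫ z in S ∩ A, G₁ z :=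
          setIntegral_mono_on (hIntS.mono_set Set.inter_subset_left)
            (hIntG1.mono_set hsub1) (hSm.inter hAm) hpt
      _ ≤ ∫ z in T₁, G₁ z := by
          apply setIntegral_mono_set hIntG1
          · filter_upwards with z using hG1nn z
          · exact HasSubset.Subset.eventuallyLE hsub1
      _ = (16/9 * (r/2) ^ (-(2*α))) * ∫ z in T₁, (‖z - yt‖^2)⁻¹ := by
          rw [hG1, integral_const_mul]
      _ = (16/9 * (r/2) ^ (-(2*α))) * (2*π*(Real.log 2 - Real.log (2*d))) := by
          rw [hT1, annulus_log yt (by linarith) (by linarith)]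
      _ = (16/9 * (r/2) ^ (-(2*α))) * (2*π*L) := by rw [hlogd]
  have hB2 : ∫ z in S \ A, f z
      ≤ (64/9 * (r^2)⁻¹) * (2*π*((r/2) ^ ((-(2*α)) + 2) / ((-(2*α)) + 2))) := by
    set T₂ : Set ℂ := {z : ℂ | ‖z - x‖ ∈ Set.Ico (2*d) (r/2)} with hT2
    have hT2m : MeasurableSet T₂ := by
      have hm : Measurable fun z : ℂ => ‖z - x‖ := by fun_prop
      exact hm measurableSet_Ico
    have hT2sub : T₂ ⊆ Metric.closedBall x (r/2) := by
      intro z hz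
      rw [Metric.mem_closedBall, dist_eq_norm]
      exact le_of_lt hz.2
    have hsub2 : S \ A ⊆ T₂ := by
      intro z hz
      obtain ⟨hzS, hzA⟩ := hz
      obtain ⟨h1, h2, h3⟩ := hSmem z hzS
      have hnA : ¬ (r/2 ≤ ‖z - x‖) := hzA
      exact ⟨h2, lt_of_not_ge hnA⟩
    set G₂ : ℂ → ℝ := fun z => (64/9 * (r^2)⁻¹) * ‖z - x‖ ^ (-(2*α)) with hG2
    have hc2nn : (0:ℝ) ≤ 64/9 * (r^2)⁻¹ := by positivity
    have hG2nn : ∀ z, 0 ≤ G₂ z := fun z => by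
      rw [hG2]
      have := Real.rpow_nonneg (norm_nonneg (z - x)) (-(2*α))
      positivity
    have hG2m : AEStronglyMeasurable G₂ volume := by
      apply Measurable.aestronglyMeasurable; rw [hG2]; fun_prop
    have hIntG2 : IntegrableOn G₂ T₂ volume := by
      apply integrableOn_bdd (M := (64/9 * (r^2)⁻¹) * (2*d) ^ (-(2*α))) hT2sub hG2m hT2m
      intro z hz
      rw [abs_of_nonneg (hG2nn z), hG2]
      apply mul_le_mul_of_nonneg_left _ hc2nn
      exact Real.rpow_le_rpow_of_nonpos (by linarith) hz.1 (by linarith)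
    have hpt : ∀ z ∈ S \ A, f z ≤ G₂ z := by
      intro z hz
      obtain ⟨hzS, hzA⟩ := hz
      obtain ⟨h1, h2, h3⟩ := hSmem z hzS
      have hzxr : ‖z - x‖ < r/2 := lt_of_not_ge hzA
      have htri : r ≤ ‖z - x‖ + ‖z - yt‖ := by
        have hh : ‖x - yt‖ ≤ ‖x - z‖ + ‖z - yt‖ := by
          have heq2 : x - yt = (x - z) + (z - yt) := by ring
          rw [heq2]; exact norm_add_le _ _
        rw [norm_sub_rev x z] at hh
        rw [hr]; exact hh
      have hzy1 : 3/8 * r ≤ ‖z - y₁‖ := by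
        have := hSy1 z hzS; linarith
      have hzy2 : 3/8 * r ≤ ‖z - y₂‖ := by
        have := hSy2 z hzS; linarith
      have e1 : ‖z - y₁‖⁻¹ ≤ (3/8 * r)⁻¹ := inv_anti₀ (by linarith) hzy1
      have e2 : ‖z - y₂‖⁻¹ ≤ (3/8 * r)⁻¹ := inv_anti₀ (by linarith) hzy2
      have heq : (3/8*r)⁻¹ * (3/8*r)⁻¹ * ‖z - x‖ ^ (-(2*α)) = G₂ z := by
        rw [hG2]; field_simp; ring
      rw [hf, ← heq]
      apply mul_le_mul_of_nonneg_right _ (Real.rpow_nonneg (norm_nonneg _) _)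
      exact mul_le_mul e1 e2 (by positivity) (by positivity)
    calc ∫ z in S \ A, f z ≤ ∫ z in S \ A, G₂ z :=
          setIntegral_mono_on (hIntS.mono_set Set.diff_subset)
            (hIntG2.mono_set hsub2) (hSm.diff hAm) hpt
      _ ≤ ∫ z in T₂, G₂ z := by
          apply setIntegral_mono_set hIntG2
          · filter_upwards with z using hG2nn z
          · exact HasSubset.Subset.eventuallyLE hsub2
      _ = (64/9 * (r^2)⁻¹) * ∫ z in T₂, ‖z - x‖ ^ (-(2*α)) := by
          rw [hG2, integral_const_mul]
      _ ≤ (64/9 * (r^2)⁻¹) * (2*π*((r/2) ^ ((-(2*α)) + 2) / ((-(2*α)) + 2))) := by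
          apply mul_le_mul_of_nonneg_left _ hc2nn
          rw [hT2]
          exact ball_rpow x (by linarith) hrd4 (by linarith)
  -- final assembly
  have hX0 : (0:ℝ) ≤ ‖x - y₁‖ ^ (2*α) := Real.rpow_nonneg (norm_nonneg _) _
  have hXc1 : ‖x - y₁‖ ^ (2*α) * (r/2) ^ (-(2*α)) ≤ 5 := by
    have hb0 : (0:ℝ) < r/2 := by linarith
    have hab : ‖x - y₁‖ ≤ 11/5 * (r/2) := by linarith
    have h1 : ‖x - y₁‖ ^ (2*α) ≤ (11/5 * (r/2)) ^ (2*α) :=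
      Real.rpow_le_rpow (norm_nonneg _) hab (by linarith)
    have h2 : (11/5 * (r/2)) ^ (2*α) = (11/5:ℝ) ^ (2*α) * (r/2) ^ (2*α) :=
      Real.mul_rpow (by norm_num) hb0.le
    have h3 : (11/5:ℝ) ^ (2*α) ≤ (11/5:ℝ) ^ (2:ℝ) :=
      Real.rpow_le_rpow_of_exponent_le (by norm_num) (by linarith)
    have h4 : (11/5:ℝ) ^ (2:ℝ) = 121/25 := by
      rw [show (2:ℝ) = ((2:ℕ):ℝ) by norm_num, Real.rpow_natCast]; norm_num
    have h5 : (0:ℝ) < (r/2) ^ (2*α) := Real.rpow_pos_of_pos hb0 _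
    have h6 : (r/2) ^ (-(2*α)) = ((r/2) ^ (2*α))⁻¹ := by
      rw [Real.rpow_neg hb0.le]
    rw [h6]
    have hle : ‖x - y₁‖ ^ (2*α) ≤ 5 * (r/2) ^ (2*α) := by
      calc ‖x - y₁‖ ^ (2*α) ≤ (11/5:ℝ) ^ (2*α) * (r/2) ^ (2*α) := by rw [← h2]; exact h1
        _ ≤ 5 * (r/2) ^ (2*α) := by nlinarith
    calc ‖x - y₁‖ ^ (2*α) * ((r/2) ^ (2*α))⁻¹
        ≤ (5 * (r/2) ^ (2*α)) * ((r/2) ^ (2*α))⁻¹ :=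
          mul_le_mul_of_nonneg_right hle (by positivity)
      _ = 5 := by field_simp
  have hXc2 : ‖x - y₁‖ ^ (2*α) * ((r^2)⁻¹ * (r/2) ^ ((-(2*α)) + 2)) ≤ 4 := by
    have h1 : ‖x - y₁‖ ^ (2*α) ≤ (2*r) ^ (2*α) :=
      Real.rpow_le_rpow (norm_nonneg _) (by linarith) (by linarith)
    have h2 : (2*r) ^ (2*α) = (2:ℝ) ^ (2*α) * r ^ (2*α) := Real.mul_rpow (by norm_num) hr0.le
    have h3 : (2:ℝ) ^ (2*α) ≤ (2:ℝ) ^ (2:ℝ) :=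
      Real.rpow_le_rpow_of_exponent_le (by norm_num) (by linarith)
    have h4 : (2:ℝ) ^ (2:ℝ) = 4 := by
      rw [show (2:ℝ) = ((2:ℕ):ℝ) by norm_num, Real.rpow_natCast]; norm_num
    have h5 : (r/2) ^ ((-(2*α)) + 2) ≤ r ^ ((-(2*α)) + 2) :=
      Real.rpow_le_rpow (by linarith) (by linarith) (by linarith)
    have h6 : r ^ (2*α) * r ^ ((-(2*α)) + 2) = r^2 := by
      rw [← Real.rpow_add hr0, show 2*α + ((-(2*α)) + 2) = (2:ℝ) by ring,
        show (2:ℝ) = ((2:ℕ):ℝ) by norm_num, Real.rpow_natCast]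
    have hX4 : ‖x - y₁‖ ^ (2*α) ≤ 4 * r ^ (2*α) := by
      have hrp : (0:ℝ) ≤ r ^ (2*α) := Real.rpow_nonneg hr0.le _
      calc ‖x - y₁‖ ^ (2*α) ≤ (2:ℝ) ^ (2*α) * r ^ (2*α) := by rw [← h2]; exact h1
        _ ≤ 4 * r ^ (2*α) := by nlinarith
    calc ‖x - y₁‖ ^ (2*α) * ((r^2)⁻¹ * (r/2) ^ ((-(2*α)) + 2))
        ≤ (4 * r ^ (2*α)) * ((r^2)⁻¹ * r ^ ((-(2*α)) + 2)) := by
          apply mul_le_mul hX4 (mul_le_mul_of_nonneg_left h5 (by positivity))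
            (by positivity) (by positivity)
      _ = 4 * ((r^2)⁻¹ * (r ^ (2*α) * r ^ ((-(2*α)) + 2))) := by ring
      _ = 4 := by rw [h6]; field_simp
  have hd2a : (0:ℝ) < (-(2*α)) + 2 := by linarith
  have key1 : ‖x - y₁‖ ^ (2*α) * ∫ z in S ∩ A, f z ≤ 5 * (16/9 * (2*π) * L) := by
    calc ‖x - y₁‖ ^ (2*α) * ∫ z in S ∩ A, f z
        ≤ ‖x - y₁‖ ^ (2*α) * ((16/9 * (r/2) ^ (-(2*α))) * (2*π*L)) :=
          mul_le_mul_of_nonneg_left hB1 hX0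
      _ = (‖x - y₁‖ ^ (2*α) * (r/2) ^ (-(2*α))) * (16/9 * (2*π) * L) := by ring
      _ ≤ 5 * (16/9 * (2*π) * L) :=
          mul_le_mul_of_nonneg_right hXc1 (by positivity)
  have key2 : ‖x - y₁‖ ^ (2*α) * ∫ z in S \ A, f z
      ≤ 4 * (64/9 * (2*π) / ((-(2*α)) + 2)) := by
    calc ‖x - y₁‖ ^ (2*α) * ∫ z in S \ A, f z
        ≤ ‖x - y₁‖ ^ (2*α) *
            ((64/9 * (r^2)⁻¹) * (2*π*((r/2) ^ ((-(2*α)) + 2) / ((-(2*α)) + 2)))) :=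
          mul_le_mul_of_nonneg_left hB2 hX0
      _ = (‖x - y₁‖ ^ (2*α) * ((r^2)⁻¹ * (r/2) ^ ((-(2*α)) + 2)))
            * (64/9 * (2*π) / ((-(2*α)) + 2)) := by ring
      _ ≤ 4 * (64/9 * (2*π) / ((-(2*α)) + 2)) := by
          apply mul_le_mul_of_nonneg_right hXc2
          exact div_nonneg (by positivity) hd2a.le
  have hden : (-(2*α)) + 2 = 2 - 2*α := by ring
  rw [hden] at key2
  have he' : (1:ℝ) ≤ (2 - 2*α)⁻¹ := by
    rw [← inv_one]
    exact inv_anti₀ h2α2 (by linarith)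
  have hfin : 5 * (16/9 * (2*π) * L) + 4 * (64/9 * (2*π) / (2 - 2*α))
      ≤ 100 * π / (2 - 2*α) * (1 + L) := by
    have he0 : (0:ℝ) ≤ (2 - 2*α)⁻¹ := by linarith
    have hA : (0:ℝ) ≤ π * L := mul_nonneg pi_pos.le hLnn
    have hB : (0:ℝ) ≤ (π * L) * ((2 - 2*α)⁻¹ - 1) := mul_nonneg hA (by linarith)
    have hC : (0:ℝ) ≤ π * (2 - 2*α)⁻¹ := mul_nonneg pi_pos.le he0
    have hgoal : 5 * (16/9 * (2*π) * L) + 4 * (64/9 * (2*π) * (2 - 2*α)⁻¹)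
        ≤ 100 * π * (2 - 2*α)⁻¹ * (1 + L) := by nlinarith
    calc 5 * (16/9 * (2*π) * L) + 4 * (64/9 * (2*π) / (2 - 2*α))
        = 5 * (16/9 * (2*π) * L) + 4 * (64/9 * (2*π) * (2 - 2*α)⁻¹) := by
          field_simp
      _ ≤ 100 * π * (2 - 2*α)⁻¹ * (1 + L) := hgoal
      _ = 100 * π / (2 - 2*α) * (1 + L) := by
          rw [eq_comm, div_eq_mul_inv]
  calc ‖x - y₁‖ ^ (2*α) * ∫ z in S, f z
      = (‖x - y₁‖ ^ (2*α) * ∫ z in S ∩ A, f z)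
        + ‖x - y₁‖ ^ (2*α) * ∫ z in S \ A, f z := by rw [hsplit, mul_add]
    _ ≤ 5 * (16/9 * (2*π) * L) + 4 * (64/9 * (2*π) / (2 - 2*α)) := add_le_add key1 key2
    _ ≤ 100 * π / (2 - 2*α) * (1 + L) := hfin
end

section
/- For every α ∈ [1/2, 1) there exists a constant C > 0 such that for all d > 0 and all points x, ỹ, y ∈ ℝ² with |y − ỹ| ≤ d/2 and |x − ỹ| ≥ 5d, one has |x − y|^{2α} ∫_{B(ỹ,2d)} |y − z|^{−1} |z − x|^{−2α} dz ≤ C d, where B(ỹ,2d) is the open ball of center ỹ and radius 2d and the integral is with respect to two-dimensional Lebesgue measure. -/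
open MeasureTheory Real Set Metric
open scoped Real

theorem lintegral_comp_polarCoord_symm_real (g : ℝ × ℝ → ENNReal) :
    (∫⁻ p in polarCoord.target, ENNReal.ofReal p.1 * g (polarCoord.symm p)) = ∫⁻ p, g p := by
  set B : ℝ × ℝ → ℝ × ℝ →L[ℝ] ℝ × ℝ := fun p =>
    LinearMap.toContinuousLinearMap (Matrix.toLin (Module.Basis.finTwoProd ℝ) (Module.Basis.finTwoProd ℝ)
      !![Real.cos p.2, -p.1 * Real.sin p.2; Real.sin p.2, p.1 * Real.cos p.2])
  have A : ∀ p ∈ polarCoord.target, HasFDerivWithinAt polarCoord.symm (B p) polarCoord.target p :=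
    fun p _ => (hasFDerivAt_polarCoord_symm p).hasFDerivWithinAt
  have B_det : ∀ p : ℝ × ℝ, (B p).det = p.1 := by
    intro p
    conv_rhs => rw [← one_mul p.1, ← Real.cos_sq_add_sin_sq p.2]
    simp only [B, neg_mul, LinearMap.det_toContinuousLinearMap, LinearMap.det_toLin,
      Matrix.det_fin_two_of, sub_neg_eq_add]
    ring
  have hinj : Set.InjOn polarCoord.symm polarCoord.target := polarCoord.symm.injOn
  have key := lintegral_image_eq_lintegral_abs_det_fderiv_mul volume
    polarCoord.open_target.measurableSet A hinj g
  rw [polarCoord.symm_image_target_eq_source] at key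
  calc
    ∫⁻ p in polarCoord.target, ENNReal.ofReal p.1 * g (polarCoord.symm p)
        = ∫⁻ p in polarCoord.target, ENNReal.ofReal |(B p).det| * g (polarCoord.symm p) := by
          refine setLIntegral_congr_fun_ae polarCoord.open_target.measurableSet
            (ae_of_all _ fun p hp => ?_)
          rw [B_det, abs_of_pos hp.1]
    _ = ∫⁻ p in polarCoord.source, g p := key.symm
    _ = ∫⁻ p, g p := by
          exact (setLIntegral_congr polarCoord_source_ae_eq_univ).trans (setLIntegral_univ _)

theorem lintegral_comp_polarCoord_symm_cx (f : ℂ → ENNReal) :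
    (∫⁻ p in polarCoord.target, ENNReal.ofReal p.1 * f (Complex.polarCoord.symm p)) =
      ∫⁻ z, f z := by
  rw [← (Complex.volume_preserving_equiv_real_prod.symm
      Complex.measurableEquivRealProd).map_eq,
    MeasureTheory.lintegral_map_equiv f Complex.measurableEquivRealProd.symm,
    ← lintegral_comp_polarCoord_symm_real]
  rfl

theorem lintegral_inv_norm_ball (R : ℝ) (hR : 0 < R) :
    ∫⁻ z in Metric.ball (0 : ℂ) R, ENNReal.ofReal ‖z‖⁻¹ = ENNReal.ofReal (2 * π * R) := by
  rw [← lintegral_indicator measurableSet_ball,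
    ← lintegral_comp_polarCoord_symm_cx ((Metric.ball (0:ℂ) R).indicator
      fun z => ENNReal.ofReal ‖z‖⁻¹)]
  have hcong : ∀ p ∈ polarCoord.target,
      ENNReal.ofReal p.1 * (Metric.ball (0:ℂ) R).indicator
          (fun z => ENNReal.ofReal ‖z‖⁻¹) (Complex.polarCoord.symm p)
        = (Ioo (0:ℝ) R ×ˢ Ioo (-π) π).indicator 1 p := by
    intro p hp
    have hp1 : 0 < p.1 := hp.1
    have hnorm : ‖Complex.polarCoord.symm p‖ = p.1 := by
      rw [Complex.norm_polarCoord_symm, abs_of_pos hp1]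
    by_cases hlt : p.1 < R
    · have hmem : Complex.polarCoord.symm p ∈ Metric.ball (0:ℂ) R := by
        simp [Metric.mem_ball, dist_zero_right, hnorm, hlt, abs_of_pos hp1]
      rw [Set.indicator_of_mem hmem, Set.indicator_of_mem (show p ∈ Ioo (0:ℝ) R ×ˢ Ioo (-π) π from ⟨⟨hp1, hlt⟩, hp.2⟩),
        hnorm, ← ENNReal.ofReal_mul hp1.le, mul_inv_cancel₀ hp1.ne', ENNReal.ofReal_one,
        Pi.one_apply]
    · have hmem : Complex.polarCoord.symm p ∉ Metric.ball (0:ℂ) R := by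
        simp [Metric.mem_ball, dist_zero_right, hnorm, hlt, abs_of_pos hp1]
      have hmem2 : p ∉ Ioo (0:ℝ) R ×ˢ Ioo (-π) π := by
        intro h; exact hlt h.1.2
      rw [Set.indicator_of_notMem hmem, Set.indicator_of_notMem hmem2, mul_zero]
  rw [setLIntegral_congr_fun_ae polarCoord.open_target.measurableSet (ae_of_all _ hcong),
    lintegral_indicator_one (measurableSet_Ioo.prod measurableSet_Ioo),
    Measure.restrict_apply (measurableSet_Ioo.prod measurableSet_Ioo)]
  have hsub : (Ioo (0:ℝ) R ×ˢ Ioo (-π) π) ∩ polarCoord.target = Ioo (0:ℝ) R ×ˢ Ioo (-π) π := by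
    refine inter_eq_self_of_subset_left ?_
    rintro ⟨a, b⟩ ⟨ha, hb⟩
    exact ⟨ha.1, hb⟩
  rw [hsub, MeasureTheory.Measure.volume_eq_prod, Measure.prod_prod, Real.volume_Ioo, Real.volume_Ioo,
    ← ENNReal.ofReal_mul (by linarith), sub_zero]
  congr 1
  ring

theorem integral_inv_norm_ball (c : ℂ) (R : ℝ) (hR : 0 < R) :
    IntegrableOn (fun z : ℂ => ‖c - z‖⁻¹) (Metric.ball c R) ∧
      ∫ z in Metric.ball c R, ‖c - z‖⁻¹ = 2 * π * R := by
  have hmeas : Measurable fun z : ℂ => ‖c - z‖⁻¹ :=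
    ((measurable_const.sub measurable_id).norm).inv
  have hlin : ∫⁻ z in Metric.ball c R, ENNReal.ofReal ‖c - z‖⁻¹
      = ENNReal.ofReal (2 * π * R) := by
    rw [← lintegral_indicator measurableSet_ball]
    have hind : ∀ z : ℂ, (Metric.ball c R).indicator (fun z => ENNReal.ofReal ‖c - z‖⁻¹) z
        = (Metric.ball (0:ℂ) R).indicator (fun w => ENNReal.ofReal ‖w‖⁻¹) (z + -c) := by
      intro z
      rw [← sub_eq_add_neg]
      by_cases hz : z ∈ Metric.ball c R
      · have hz' : z - c ∈ Metric.ball (0:ℂ) R := by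
          simpa [Metric.mem_ball, dist_eq_norm] using hz
        rw [Set.indicator_of_mem hz, Set.indicator_of_mem hz', norm_sub_rev]
      · have hz' : z - c ∉ Metric.ball (0:ℂ) R := by
          simpa [Metric.mem_ball, dist_eq_norm] using hz
        rw [Set.indicator_of_notMem hz, Set.indicator_of_notMem hz']
    simp_rw [hind]
    rw [lintegral_add_right_eq_self
        ((Metric.ball (0:ℂ) R).indicator fun w => ENNReal.ofReal ‖w‖⁻¹) (-c),
      lintegral_indicator measurableSet_ball, lintegral_inv_norm_ball R hR]
  have hnn : 0 ≤ᵐ[volume.restrict (Metric.ball c R)] fun z : ℂ => ‖c - z‖⁻¹ :=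
    ae_of_all _ fun z => by positivity
  have hint : IntegrableOn (fun z : ℂ => ‖c - z‖⁻¹) (Metric.ball c R) := by
    refine ⟨hmeas.aestronglyMeasurable, ?_⟩
    rw [hasFiniteIntegral_iff_ofReal hnn, hlin]
    exact ENNReal.ofReal_lt_top
  refine ⟨hint, ?_⟩
  rw [integral_eq_lintegral_of_nonneg_ae hnn hmeas.aestronglyMeasurable, hlin,
    ENNReal.toReal_ofReal (by positivity)]

/-- For every `α ∈ [1/2, 1)` there is `C > 0` such that for all `d > 0` and points
`x, ỹ, y` with `|y − ỹ| ≤ d/2` and `|x − ỹ| ≥ 5d`,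
`|x − y|^{2α} ∫_{B(ỹ,2d)} |y − z|⁻¹ |z − x|^{−2α} dz ≤ C d`. -/
theorem far_corner_small_ball_bound (α : ℝ) (hα : α ∈ Set.Ico (1 / 2 : ℝ) 1) :
    ∃ C : ℝ, 0 < C ∧ ∀ d : ℝ, 0 < d → ∀ x yt y : ℂ,
      ‖y - yt‖ ≤ d / 2 → 5 * d ≤ ‖x - yt‖ →
      ‖x - y‖ ^ (2 * α) * ∫ z in Metric.ball yt (2 * d), ‖y - z‖⁻¹ * ‖z - x‖ ^ (-(2 * α)) ≤
        C * d := by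
  obtain ⟨hα1, hα2⟩ := hα
  refine ⟨20 * π, by positivity, ?_⟩
  intro d hd x yt y hyyt hxyt
  obtain ⟨hint, hval⟩ := integral_inv_norm_ball y (5 / 2 * d) (by linarith)
  -- pointwise bound on the ball
  have hpt : ∀ z ∈ Metric.ball yt (2 * d),
      ‖x - y‖ ^ (2 * α) * (‖y - z‖⁻¹ * ‖z - x‖ ^ (-(2 * α))) ≤ 4 * ‖y - z‖⁻¹ := by
    intro z hz
    rw [Metric.mem_ball, dist_eq_norm] at hz
    have t2 : ‖x - yt‖ ≤ ‖x - z‖ + ‖z - yt‖ := by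
      have := dist_triangle x z yt
      simpa [dist_eq_norm] using this
    have t3 : ‖x - y‖ ≤ ‖x - yt‖ + ‖y - yt‖ := by
      have := dist_triangle x yt y
      simpa [dist_eq_norm, norm_sub_rev yt y] using this
    have hzx : ‖z - x‖ = ‖x - z‖ := norm_sub_rev z x
    have hzx3 : 3 * d ≤ ‖z - x‖ := by rw [hzx]; linarith
    have hzxpos : 0 < ‖z - x‖ := by linarith
    have hle : ‖x - y‖ ≤ 2 * ‖z - x‖ := by rw [hzx]; linarith
    have key : ‖x - y‖ ^ (2 * α) * ‖z - x‖ ^ (-(2 * α)) ≤ 4 := by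
      have h1 : ‖x - y‖ ^ (2 * α) ≤ (2 * ‖z - x‖) ^ (2 * α) :=
        Real.rpow_le_rpow (norm_nonneg _) hle (by linarith)
      have h2 : (2 * ‖z - x‖) ^ (2 * α) = 2 ^ (2 * α) * ‖z - x‖ ^ (2 * α) :=
        Real.mul_rpow (by norm_num) (norm_nonneg _)
      have h3 : (2:ℝ) ^ (2 * α) ≤ 2 ^ (2:ℝ) :=
        Real.rpow_le_rpow_of_exponent_le one_le_two (by linarith)
      have h4 : (2:ℝ) ^ (2:ℝ) = 4 := by
        rw [show (2:ℝ) = ((2:ℕ):ℝ) from by norm_num, Real.rpow_natCast]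
        norm_num
      have h5 : ‖z - x‖ ^ (2 * α) * ‖z - x‖ ^ (-(2 * α)) = 1 := by
        rw [← Real.rpow_add hzxpos]
        simp
      have h6 : 0 ≤ ‖z - x‖ ^ (-(2 * α)) := Real.rpow_nonneg (norm_nonneg _) _
      calc ‖x - y‖ ^ (2 * α) * ‖z - x‖ ^ (-(2 * α))
          ≤ (2 ^ (2 * α) * ‖z - x‖ ^ (2 * α)) * ‖z - x‖ ^ (-(2 * α)) := by
            rw [← h2]; exact mul_le_mul_of_nonneg_right h1 h6
        _ = 2 ^ (2 * α) * (‖z - x‖ ^ (2 * α) * ‖z - x‖ ^ (-(2 * α))) := by ring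
        _ = 2 ^ (2 * α) := by rw [h5, mul_one]
        _ ≤ 4 := by rw [← h4]; exact h3
    calc ‖x - y‖ ^ (2 * α) * (‖y - z‖⁻¹ * ‖z - x‖ ^ (-(2 * α)))
        = (‖x - y‖ ^ (2 * α) * ‖z - x‖ ^ (-(2 * α))) * ‖y - z‖⁻¹ := by ring
      _ ≤ 4 * ‖y - z‖⁻¹ :=
          mul_le_mul_of_nonneg_right key (inv_nonneg.2 (norm_nonneg _))
  have hsub : Metric.ball yt (2 * d) ⊆ Metric.ball y (5 / 2 * d) := by
    apply Metric.ball_subset_ball'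
    rw [dist_comm, dist_eq_norm]
    linarith
  have hintG : IntegrableOn (fun z : ℂ => ‖y - z‖⁻¹) (Metric.ball yt (2 * d)) :=
    hint.mono_set hsub
  have hnn' : 0 ≤ᵐ[volume.restrict (Metric.ball y (5 / 2 * d))] fun z : ℂ => ‖y - z‖⁻¹ :=
    ae_of_all _ fun z => by positivity
  calc ‖x - y‖ ^ (2 * α) * ∫ z in Metric.ball yt (2 * d), ‖y - z‖⁻¹ * ‖z - x‖ ^ (-(2 * α))
      = ∫ z in Metric.ball yt (2 * d),
          ‖x - y‖ ^ (2 * α) * (‖y - z‖⁻¹ * ‖z - x‖ ^ (-(2 * α))) :=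
        (integral_const_mul _ _).symm
    _ ≤ ∫ z in Metric.ball yt (2 * d), 4 * ‖y - z‖⁻¹ := by
        refine integral_mono_of_nonneg (ae_of_all _ fun z => by positivity)
          (hintG.const_mul 4) ?_
        exact (ae_restrict_iff' measurableSet_ball).2 (ae_of_all _ hpt)
    _ = 4 * ∫ z in Metric.ball yt (2 * d), ‖y - z‖⁻¹ := integral_const_mul 4 _
    _ ≤ 4 * ∫ z in Metric.ball y (5 / 2 * d), ‖y - z‖⁻¹ := by
        have := setIntegral_mono_set hint hnn' (HasSubset.Subset.eventuallyLE hsub)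
        linarith
    _ = 4 * (2 * π * (5 / 2 * d)) := by rw [hval]
    _ = 20 * π * d := by ring
end
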